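/- arXiv:math/0703570 — 4 statements merged into one kernel-verified Lean document; each statement's English description precedes it below -/
import Mathlib

section
/- Let r ≥ 2, d ≥ 1 be integers, b ≥ 0 a real, and N ≥ 2 an integer. Suppose Φ_f ≥ 0 satisfy f·Φ_f ≤ r^{df} + 1 + 2b·r^{df−f/2} for all 1 ≤ f ≤ N. Then ∑_{f=1}^{N} Φ_f · log(r^{df}/(r^{df}−1)) − S₀(N) ≤ 8/(N·r^{dN/2}) + 12b·r^{−N/4}/(N·r^{dN/2}), where S₀(N) = ∑_{f=1}^{N} Φ_f · ∑_{m=1}^{⌊N/f⌋} 1/(m·r^{dfm}). -/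
set_option maxHeartbeats 1000000
open Finset


-- numeric helpers
lemma two_rpow_half_le : (2:ℝ) ^ (-(1:ℝ)/2) ≤ 0.708 := by
  set s : ℝ := (2:ℝ) ^ (-(1:ℝ)/2) with hs
  have hs0 : 0 < s := Real.rpow_pos_of_pos (by norm_num) _
  have hsq : s ^ 2 = 1/2 := by
    rw [hs, ← Real.rpow_natCast ((2:ℝ) ^ (-(1:ℝ)/2)) 2, ← Real.rpow_mul (by norm_num)]
    norm_num
  nlinarith [sq_nonneg (s - 0.708)]

lemma two_rpow_threehalf_le : (2:ℝ) ^ (-(3:ℝ)/2) ≤ 0.354 := by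
  set s : ℝ := (2:ℝ) ^ (-(3:ℝ)/2) with hs
  have hs0 : 0 < s := Real.rpow_pos_of_pos (by norm_num) _
  have hsq : s ^ 2 = 1/8 := by
    rw [hs, ← Real.rpow_natCast ((2:ℝ) ^ (-(3:ℝ)/2)) 2, ← Real.rpow_mul (by norm_num)]
    norm_num
  nlinarith [sq_nonneg (s - 0.354)]

lemma two_rpow_threequarter_le : (2:ℝ) ^ (-(3:ℝ)/4) ≤ 0.595 := by
  set s : ℝ := (2:ℝ) ^ (-(3:ℝ)/4) with hs
  have hs0 : 0 < s := Real.rpow_pos_of_pos (by norm_num) _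
  have hsq : s ^ 2 = (2:ℝ) ^ (-(3:ℝ)/2) := by
    rw [hs, ← Real.rpow_natCast ((2:ℝ) ^ (-(3:ℝ)/4)) 2, ← Real.rpow_mul (by norm_num)]
    norm_num
  have h2 := two_rpow_threehalf_le
  rw [← hsq] at h2
  nlinarith [sq_nonneg (s - 0.595)]



lemma geom_sum_le_div' {c : ℝ} (h0 : 0 ≤ c) (h1 : c < 1) (n : ℕ) :
    ∑ i ∈ range n, c ^ i ≤ 1 / (1 - c) := by
  have h2 : (0:ℝ) < 1 - c := by linarith
  have hcn : (0:ℝ) ≤ c ^ n := pow_nonneg h0 n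
  have := geom_sum_eq (by intro hc; rw [hc] at h1; exact lt_irrefl 1 h1 : c ≠ 1) n
  rw [this, show c ^ n - 1 = -(1 - c ^ n) by ring, show c - 1 = -(1 - c) by ring,
    neg_div_neg_eq, div_le_div_iff₀ h2 h2]
  nlinarith [mul_nonneg hcn h2.le]

lemma sum_pow_le' {c : ℝ} (h0 : 0 ≤ c) (h1 : c < 1) (s : Finset ℕ) (e : ℕ → ℕ)
    (he : Set.InjOn e s) (m : ℕ) (hm : ∀ f ∈ s, m ≤ e f) :
    ∑ f ∈ s, c ^ (e f) ≤ c ^ m / (1 - c) := by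
  have h2 : (0:ℝ) < 1 - c := by linarith
  rw [show ∑ f ∈ s, c ^ (e f) = ∑ j ∈ s.image e, c ^ j from
    (Finset.sum_image (fun a ha b hb hab => he ha hb hab)).symm]
  set B := (s.image e).sup id with hB
  have hsub : s.image e ⊆ Finset.Ico m (B + 1) := by
    intro j hj
    simp only [Finset.mem_image] at hj
    obtain ⟨a, ha, rfl⟩ := hj
    refine Finset.mem_Ico.2 ⟨hm a ha, Nat.lt_succ_of_le ?_⟩
    exact Finset.le_sup (f := id) (Finset.mem_image_of_mem e ha)
  calc ∑ j ∈ s.image e, c ^ j ≤ ∑ j ∈ Finset.Ico m (B+1), c ^ j :=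
        Finset.sum_le_sum_of_subset_of_nonneg hsub (fun i _ _ => pow_nonneg h0 i)
    _ = ∑ i ∈ range (B + 1 - m), c ^ (m + i) := Finset.sum_Ico_eq_sum_range _ _ _
    _ = c ^ m * ∑ i ∈ range (B + 1 - m), c ^ i := by
        rw [Finset.mul_sum]; exact Finset.sum_congr rfl fun i _ => by rw [pow_add]
    _ ≤ c ^ m * (1 / (1 - c)) := by
        exact mul_le_mul_of_nonneg_left (geom_sum_le_div' h0 h1 _) (pow_nonneg h0 m)
    _ = c ^ m / (1 - c) := by ring



lemma log_tail (x : ℝ) (hx : 2 ≤ x) (M : ℕ) :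
    0 ≤ Real.log (x / (x - 1)) - ∑ m ∈ Finset.Icc 1 M, 1 / ((m:ℝ) * x ^ m) ∧
      Real.log (x / (x - 1)) - ∑ m ∈ Finset.Icc 1 M, 1 / ((m:ℝ) * x ^ m) ≤
        1 / (((M:ℝ) + 1) * x ^ M * (x - 1)) := by
  have hx0 : (0:ℝ) < x := by linarith
  have hx1 : (1:ℝ) < x := by linarith
  set y : ℝ := 1 / x with hy
  have hy0 : 0 < y := by positivity
  have hyh : y ≤ 1/2 := by rw [hy, div_le_div_iff₀ hx0 (by norm_num)]; linarith
  have hy1 : |y| < 1 := by rw [abs_of_pos hy0]; linarith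
  have hS := Real.hasSum_pow_div_log_of_abs_lt_one hy1
  have hlog : -Real.log (1 - y) = Real.log (x / (x - 1)) := by
    rw [hy, show (1:ℝ) - 1/x = (x-1)/x by field_simp,
      Real.log_div (by linarith) (by linarith), Real.log_div (by linarith) (by linarith)]
    ring
  rw [hlog] at hS
  have hpart : ∑ m ∈ Finset.Icc 1 M, 1 / ((m:ℝ) * x ^ m)
      = ∑ n ∈ Finset.range M, y ^ (n+1) / ((n:ℝ)+1) := by
    rw [← Finset.Ico_add_one_right_eq_Icc, Finset.sum_Ico_eq_sum_range]
    simp only [Nat.add_sub_cancel, Nat.succ_sub_one]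
    refine Finset.sum_congr rfl fun n _ => ?_
    rw [hy, div_pow, one_pow, Nat.add_comm 1 n]
    push_cast
    rw [div_div]
    ring_nf
  -- tail has sum
  set T : ℝ := Real.log (x / (x - 1)) - ∑ m ∈ Finset.Icc 1 M, 1 / ((m:ℝ) * x ^ m) with hT
  have htail : HasSum (fun n : ℕ => y ^ (n + M + 1) / (((n + M : ℕ) : ℝ) + 1)) T := by
    refine (hasSum_nat_add_iff (f := fun n : ℕ => y ^ (n+1) / ((n:ℝ)+1)) M).2 ?_
    have e : T + ∑ i ∈ Finset.range M, y ^ (i + 1) / ((i:ℝ) + 1) = Real.log (x / (x - 1)) := by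
      rw [hT, hpart]; ring
    rw [e]; exact hS
  constructor
  · exact hasSum_le (fun n => by positivity) hasSum_zero htail
  · have hG : HasSum (fun n : ℕ => y ^ (M+1) / ((M:ℝ)+1) * y ^ n)
        (y ^ (M+1) / ((M:ℝ)+1) * (1 - y)⁻¹) :=
      (hasSum_geometric_of_lt_one hy0.le (by linarith)).mul_left _
    have hle : T ≤ y ^ (M+1) / ((M:ℝ)+1) * (1 - y)⁻¹ := by
      refine hasSum_le (fun n => ?_) htail hG
      rw [show n + M + 1 = (M+1) + n by omega, pow_add,
        show y ^ (M+1) / ((M:ℝ)+1) * y ^ n = y ^ (M+1) * y ^ n / ((M:ℝ)+1) by ring]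
      rw [div_le_div_iff₀ (by push_cast; positivity) (by positivity)]
      have hyn : (0:ℝ) ≤ y ^ (M+1) * y ^ n := by positivity
      have : ((M:ℝ) + 1) ≤ ((n + M : ℕ) : ℝ) + 1 := by push_cast; linarith [Nat.cast_nonneg (α := ℝ) n]
      nlinarith
    refine hle.trans_eq ?_
    rw [hy, div_pow, one_pow, show (1:ℝ) - 1/x = (x-1)/x by field_simp, inv_div, pow_succ]
    have hxm : x ^ M ≠ 0 := by positivity
    have hx1' : x - 1 ≠ 0 := by linarith
    have hM1 : (M:ℝ) + 1 ≠ 0 := by positivity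
    field_simp


lemma key_bound (r d N : ℕ) (hr : 2 ≤ r) (hd : 1 ≤ d) (hN : 2 ≤ N)
    (b : ℝ) (hb : 0 ≤ b) (Φ : ℕ → ℝ)
    (h : ∀ f, 1 ≤ f → f ≤ N → (f : ℝ) * Φ f ≤
        (r : ℝ) ^ (d * f) + 1 + 2 * b * (r : ℝ) ^ ((d * f : ℝ) - (f : ℝ) / 2))
    (f : ℕ) (hf1 : 1 ≤ f) (hfN : f ≤ N) :
    Φ f * Real.log ((r : ℝ) ^ (d * f) / ((r : ℝ) ^ (d * f) - 1)) -
      Φ f * ∑ m ∈ Finset.Icc 1 (N / f), 1 / ((m : ℝ) * (r : ℝ) ^ (d * f * m)) ≤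
    (3 * (((r:ℝ) ^ (d * f * (N / f)))⁻¹) +
      4 * b * ((r:ℝ) ^ (d * f * (N / f)))⁻¹ * (r:ℝ) ^ (-(f:ℝ)/2)) / N := by
  have hrr : (2:ℝ) ≤ (r:ℝ) := by exact_mod_cast hr
  have hrr0 : (0:ℝ) < (r:ℝ) := by linarith
  have hrr1 : (1:ℝ) ≤ (r:ℝ) := by linarith
  have hN0 : (0:ℝ) < (N:ℝ) := by exact_mod_cast Nat.lt_of_lt_of_le Nat.zero_lt_two hN
  set M : ℕ := N / f with hM
  set x : ℝ := (r:ℝ) ^ (d * f) with hx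
  have hdf1 : 1 ≤ d * f := Nat.one_le_iff_ne_zero.2 (by positivity)
  have hx2 : (2:ℝ) ≤ x := by
    calc (2:ℝ) = 2 ^ 1 := (pow_one 2).symm
    _ ≤ (2:ℝ) ^ (d * f) := pow_le_pow_right₀ (by norm_num) hdf1
    _ ≤ (r:ℝ) ^ (d * f) := pow_le_pow_left₀ (by norm_num) hrr _
  have hx1 : (1:ℝ) < x := by linarith
  have hxM : (0:ℝ) < x ^ M := by positivity
  have hinner : (∑ m ∈ Finset.Icc 1 (N / f), 1 / ((m : ℝ) * (r : ℝ) ^ (d * f * m)))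
      = ∑ m ∈ Finset.Icc 1 M, 1 / ((m:ℝ) * x ^ m) := by
    refine Finset.sum_congr rfl fun m _ => ?_
    rw [hx, ← pow_mul]
  obtain ⟨ht0, ht1⟩ := log_tail x hx2 M
  set u : ℝ := (r:ℝ) ^ (-(f:ℝ)/2) with hu
  have hu0 : 0 < u := Real.rpow_pos_of_pos hrr0 _
  have hsplit : (r : ℝ) ^ ((d * f : ℝ) - (f : ℝ) / 2) = x * u := by
    rw [hu, hx, show ((d * f : ℝ)) - (f:ℝ)/2 = ((d * f : ℕ) : ℝ) + (-(f:ℝ)/2) by push_cast; ring,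
      Real.rpow_add hrr0, Real.rpow_natCast]
  set T : ℝ := Real.log (x / (x - 1)) - ∑ m ∈ Finset.Icc 1 M, 1 / ((m:ℝ) * x ^ m) with hT
  have hΦf : Φ f ≤ (x + 1 + 2 * b * (x * u)) / f := by
    rw [le_div_iff₀ (by exact_mod_cast Nat.lt_of_lt_of_le Nat.zero_lt_one hf1)]
    have := h f hf1 hfN
    rw [hsplit] at this
    linarith [this]
  have hRf : (0:ℝ) ≤ x + 1 + 2 * b * (x * u) := by positivity
  have hstep1 : Φ f * Real.log ((r : ℝ) ^ (d * f) / ((r : ℝ) ^ (d * f) - 1)) -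
      Φ f * ∑ m ∈ Finset.Icc 1 (N / f), 1 / ((m : ℝ) * (r : ℝ) ^ (d * f * m)) = Φ f * T := by
    rw [hinner, hT, hx]; ring
  rw [hstep1]
  have hNle : (N:ℝ) ≤ (f:ℝ) * ((M:ℝ) + 1) := by
    have h3 : N ≤ f * (M + 1) := by
      rw [hM, Nat.mul_succ]
      calc N = f * (N / f) + N % f := (Nat.div_add_mod N f).symm
      _ ≤ f * (N / f) + f := Nat.add_le_add_left (Nat.le_of_lt (Nat.mod_lt _ (by omega))) _
    have h4 := (Nat.cast_le (α := ℝ)).2 h3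
    push_cast at h4
    linarith
  have hM1 : (0:ℝ) < (M:ℝ) + 1 := by positivity
  have hf0 : (0:ℝ) < (f:ℝ) := by exact_mod_cast Nat.lt_of_lt_of_le Nat.zero_lt_one hf1
  set Mp : ℝ := (M:ℝ) + 1 with hMp
  have hMp0 : (0:ℝ) < Mp := by rw [hMp]; positivity
  have hRS : (0:ℝ) ≤ 3 + 4 * b * u := by positivity
  have hnum : x + 1 + 2 * b * (x * u) ≤ (3 + 4 * b * u) * (x - 1) := by
    nlinarith [mul_nonneg (mul_nonneg hb hu0.le) (by linarith : (0:ℝ) ≤ x - 2)]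
  have hD0 : (0:ℝ) < (f:ℝ) * (Mp * x ^ M * (x - 1)) := by
    apply mul_pos hf0
    apply mul_pos (mul_pos hMp0 hxM)
    linarith
  have hkey : (3 * (x ^ M)⁻¹ + 4 * b * (x ^ M)⁻¹ * u) * ((f:ℝ) * (Mp * x ^ M * (x - 1)))
      = (3 + 4 * b * u) * (x - 1) * ((f:ℝ) * Mp) := by
    have hxMinv : (x ^ M) * (x ^ M)⁻¹ = 1 := mul_inv_cancel₀ (ne_of_gt hxM)
    calc (3 * (x ^ M)⁻¹ + 4 * b * (x ^ M)⁻¹ * u) * ((f:ℝ) * (Mp * x ^ M * (x - 1)))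
        = (3 + 4 * b * u) * (x - 1) * ((f:ℝ) * Mp) * ((x ^ M) * (x ^ M)⁻¹) := by ring
    _ = (3 + 4 * b * u) * (x - 1) * ((f:ℝ) * Mp) := by rw [hxMinv, mul_one]
  have hmain : Φ f * T ≤ (3 * (x ^ M)⁻¹ + 4 * b * (x ^ M)⁻¹ * u) / N := by
    calc Φ f * T ≤ ((x + 1 + 2 * b * (x * u)) / f) * T :=
          mul_le_mul_of_nonneg_right hΦf ht0
      _ ≤ ((x + 1 + 2 * b * (x * u)) / f) * (1 / (Mp * x ^ M * (x - 1))) :=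
          mul_le_mul_of_nonneg_left ht1 (by positivity)
      _ = (x + 1 + 2 * b * (x * u)) / ((f:ℝ) * (Mp * x ^ M * (x - 1))) := by
          rw [div_mul_div_comm, mul_one]
      _ ≤ (3 * (x ^ M)⁻¹ + 4 * b * (x ^ M)⁻¹ * u) / N := by
          rw [div_le_div_iff₀ hD0 hN0, hkey]
          calc (x + 1 + 2 * b * (x * u)) * N ≤ (x + 1 + 2 * b * (x * u)) * ((f:ℝ) * Mp) :=
                mul_le_mul_of_nonneg_left hNle hRf
          _ ≤ ((3 + 4 * b * u) * (x - 1)) * ((f:ℝ) * Mp) :=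
                mul_le_mul_of_nonneg_right hnum (by positivity)
          _ = (3 + 4 * b * u) * (x - 1) * ((f:ℝ) * Mp) := by ring
  have hxM_eq : x ^ M = (r:ℝ) ^ (d * f * M) := by rw [hx, ← pow_mul]
  rw [← hxM_eq]
  exact hmain


theorem stmt_13_aux (r d N : ℕ) (hr : 2 ≤ r) (hd : 1 ≤ d) (hN : 2 ≤ N)
    (b : ℝ) (hb : 0 ≤ b) (Φ : ℕ → ℝ) (hΦ : ∀ f, 0 ≤ Φ f)
    (h : ∀ f, 1 ≤ f → f ≤ N → (f : ℝ) * Φ f ≤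
        (r : ℝ) ^ (d * f) + 1 + 2 * b * (r : ℝ) ^ ((d * f : ℝ) - (f : ℝ) / 2))
    (key : ∀ f, 1 ≤ f → f ≤ N →
      Φ f * Real.log ((r : ℝ) ^ (d * f) / ((r : ℝ) ^ (d * f) - 1)) -
        Φ f * ∑ m ∈ Finset.Icc 1 (N / f), 1 / ((m : ℝ) * (r : ℝ) ^ (d * f * m)) ≤
      (3 * (((r:ℝ) ^ (d * f * (N / f)))⁻¹) +
        4 * b * ((r:ℝ) ^ (d * f * (N / f)))⁻¹ * (r:ℝ) ^ (-(f:ℝ)/2)) / N)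
    (sum_pow_le' : ∀ {c : ℝ}, 0 ≤ c → c < 1 → ∀ (s : Finset ℕ) (e : ℕ → ℕ),
      Set.InjOn e s → ∀ (m : ℕ), (∀ f ∈ s, m ≤ e f) →
      ∑ f ∈ s, c ^ (e f) ≤ c ^ m / (1 - c)) :
    (∑ f ∈ Finset.Icc 1 N, Φ f * Real.log ((r : ℝ) ^ (d * f) / ((r : ℝ) ^ (d * f) - 1))) -
        (∑ f ∈ Finset.Icc 1 N, Φ f * ∑ m ∈ Finset.Icc 1 (N / f), 1 / ((m : ℝ) * (r : ℝ) ^ (d * f * m))) ≤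
      8 / ((N : ℝ) * (r : ℝ) ^ ((d * N : ℝ) / 2)) +
        12 * b * (r : ℝ) ^ (-(N : ℝ) / 4) / ((N : ℝ) * (r : ℝ) ^ ((d * N : ℝ) / 2)) := by
  have hrr : (2:ℝ) ≤ (r:ℝ) := by exact_mod_cast hr
  have hrr0 : (0:ℝ) < (r:ℝ) := by linarith
  have hrr1 : (1:ℝ) ≤ (r:ℝ) := by linarith
  have hN0 : (0:ℝ) < (N:ℝ) := by exact_mod_cast Nat.lt_of_lt_of_le Nat.zero_lt_two hN
  have hd1 : (1:ℝ) ≤ (d:ℝ) := by exact_mod_cast hd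
  set K : ℕ := N / 2 with hK
  have hK1 : 1 ≤ K := by omega
  have hKN : K ≤ N := by omega
  have hKr : 2 * (K:ℝ) ≤ (N:ℝ) := by exact_mod_cast (by omega : 2 * K ≤ N)
  have hKr' : (N:ℝ) ≤ 2 * (K:ℝ) + 1 := by exact_mod_cast (by omega : N ≤ 2 * K + 1)
  -- rpow helpers
  have hsplitP : ∀ E F : ℝ, (r:ℝ) ^ (-(E+F)) = (r:ℝ) ^ (-E) * (r:ℝ) ^ (-F) := by
    intro E F
    rw [← Real.rpow_add hrr0]; ring_nf
  have hmono : ∀ E F : ℝ, E ≤ F → (r:ℝ) ^ (-F) ≤ (r:ℝ) ^ (-E) := fun E F hEF =>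
    Real.rpow_le_rpow_of_exponent_le hrr1 (by linarith)
  have hbase : ∀ E : ℝ, 0 ≤ E → (r:ℝ) ^ (-E) ≤ (2:ℝ) ^ (-E) := by
    intro E hE
    rw [Real.rpow_neg hrr0.le, Real.rpow_neg (by norm_num : (0:ℝ) ≤ 2)]
    exact inv_anti₀ (Real.rpow_pos_of_pos (by norm_num) E)
      (Real.rpow_le_rpow (by norm_num) hrr hE)
  set qd : ℝ := ((r:ℝ) ^ d)⁻¹ with hqd
  set c1 : ℝ := (r:ℝ) ^ (-((d:ℝ) - 1/2)) with hc1
  set c2 : ℝ := (r:ℝ) ^ (-((d:ℝ) + 1/2)) with hc2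
  set eK : ℝ := (d:ℝ) * ((N:ℝ) + 1 - (K:ℝ)) + (K:ℝ)/2 with heK
  set P : ℝ := (r:ℝ) ^ ((d:ℝ) * (N:ℝ) / 2) with hP
  set Q : ℝ := (r:ℝ) ^ (-(N:ℝ)/4) with hQ
  have hP0 : 0 < P := Real.rpow_pos_of_pos hrr0 _
  have hQ0 : 0 < Q := Real.rpow_pos_of_pos hrr0 _
  have hPinv : P⁻¹ = (r:ℝ) ^ (-((d:ℝ) * (N:ℝ) / 2)) := by
    rw [hP, ← Real.rpow_neg hrr0.le]
  -- bounds on ratios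
  have hrd2 : (2:ℝ) ≤ (r:ℝ) ^ (d:ℝ) := by
    calc (2:ℝ) = (2:ℝ) ^ (1:ℝ) := (Real.rpow_one 2).symm
    _ ≤ (2:ℝ) ^ (d:ℝ) := Real.rpow_le_rpow_of_exponent_le (by norm_num) hd1
    _ ≤ (r:ℝ) ^ (d:ℝ) := Real.rpow_le_rpow (by norm_num) hrr (by linarith)
  have hqd_eq : qd = (r:ℝ) ^ (-(d:ℝ)) := by
    rw [hqd, ← Real.rpow_natCast (r:ℝ) d, ← Real.rpow_neg hrr0.le]
  have hqd0 : 0 ≤ qd := by rw [hqd_eq]; positivity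
  have hqdh : qd ≤ 1/2 := by
    rw [hqd]
    rw [show ((r:ℝ) ^ d) = (r:ℝ) ^ (d:ℝ) from (Real.rpow_natCast _ _).symm]
    rw [inv_le_comm₀ (by positivity) (by norm_num)]
    linarith
  have hc10 : 0 ≤ c1 := le_of_lt (Real.rpow_pos_of_pos hrr0 _)
  have hc1h : c1 ≤ 0.708 := by
    calc c1 ≤ (r:ℝ) ^ (-(1:ℝ)/2) := by
          rw [hc1, show (-(1:ℝ)/2) = -((1:ℝ)/2) by ring]
          exact hmono _ _ (by linarith)
    _ ≤ (2:ℝ) ^ (-(1:ℝ)/2) := by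
          rw [show (-(1:ℝ)/2) = -((1:ℝ)/2) by ring]
          exact hbase _ (by norm_num)
    _ ≤ 0.708 := two_rpow_half_le
  have hc20 : 0 ≤ c2 := le_of_lt (Real.rpow_pos_of_pos hrr0 _)
  have hc2h : c2 ≤ 0.354 := by
    calc c2 ≤ (r:ℝ) ^ (-(3:ℝ)/2) := by
          rw [hc2, show (-(3:ℝ)/2) = -((3:ℝ)/2) by ring]
          exact hmono _ _ (by linarith)
    _ ≤ (2:ℝ) ^ (-(3:ℝ)/2) := by
          rw [show (-(3:ℝ)/2) = -((3:ℝ)/2) by ring]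
          exact hbase _ (by norm_num)
    _ ≤ 0.354 := two_rpow_threehalf_le
  have hconv : ∀ n : ℕ, ((r:ℝ) ^ n)⁻¹ = (r:ℝ) ^ (-(n:ℝ)) := fun n => by
    rw [← Real.rpow_natCast (r:ℝ) n, ← Real.rpow_neg hrr0.le]
  have hdivlb : ∀ f, 1 ≤ f → f ≤ N → N + 1 - f ≤ f * (N / f) := by
    intro f hf1 hfN
    have h1 : f * (N / f) + N % f = N := Nat.div_add_mod N f
    have h2 : N % f < f := Nat.mod_lt _ (by omega)
    revert h1 h2
    generalize f * (N / f) = a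
    generalize N % f = m0
    intro h1 h2
    omega
  have hcastsub : ∀ f : ℕ, f ≤ N + 1 → ((N + 1 - f : ℕ):ℝ) = (N:ℝ) + 1 - (f:ℝ) := by
    intro f hf
    rw [Nat.cast_sub hf]
    push_cast
    ring
  -- low range pointwise
  have hlowptA : ∀ f, 1 ≤ f → f ≤ K → ((r:ℝ) ^ (d * f * (N / f)))⁻¹ ≤ qd ^ (N + 1 - f) := by
    intro f hf1 hfK
    have hfN : f ≤ N := le_trans hfK hKN
    have hexp : d * (N + 1 - f) ≤ d * f * (N / f) := by
      rw [Nat.mul_assoc]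
      exact Nat.mul_le_mul_left d (hdivlb f hf1 hfN)
    have : qd ^ (N + 1 - f) = ((r:ℝ) ^ (d * (N + 1 - f)))⁻¹ := by
      rw [hqd, inv_pow, ← pow_mul]
    rw [this]
    exact inv_anti₀ (by positivity) (pow_le_pow_right₀ hrr1 hexp)
  have hlowptB : ∀ f, 1 ≤ f → f ≤ K →
      ((r:ℝ) ^ (d * f * (N / f)))⁻¹ * (r:ℝ) ^ (-(f:ℝ)/2) ≤ (r:ℝ) ^ (-eK) * c1 ^ (K - f) := by
    intro f hf1 hfK
    have hfN : f ≤ N := le_trans hfK hKN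
    have hexp : d * (N + 1 - f) ≤ d * f * (N / f) := by
      rw [Nat.mul_assoc]
      exact Nat.mul_le_mul_left d (hdivlb f hf1 hfN)
    have hexpR : (d:ℝ) * ((N:ℝ) + 1 - (f:ℝ)) ≤ ((d * f * (N / f) : ℕ) : ℝ) := by
      have := (Nat.cast_le (α := ℝ)).2 hexp
      rw [Nat.cast_mul, hcastsub f (by omega)] at this
      exact this
    have hRHSeq : (r:ℝ) ^ (-eK) * c1 ^ (K - f)
        = (r:ℝ) ^ (-((d:ℝ) * ((N:ℝ) + 1 - (f:ℝ)) + (f:ℝ)/2)) := by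
      rw [hc1, ← Real.rpow_natCast ((r:ℝ) ^ (-((d:ℝ) - 1/2))) (K - f),
        ← Real.rpow_mul hrr0.le, ← Real.rpow_add hrr0]
      congr 1
      rw [Nat.cast_sub hfK, heK]
      ring
    calc ((r:ℝ) ^ (d * f * (N / f)))⁻¹ * (r:ℝ) ^ (-(f:ℝ)/2)
        = (r:ℝ) ^ (-(((d * f * (N / f) : ℕ):ℝ) + (f:ℝ)/2)) := by
          rw [hconv, hsplitP]
          congr 2
          ring
      _ ≤ (r:ℝ) ^ (-((d:ℝ) * ((N:ℝ) + 1 - (f:ℝ)) + (f:ℝ)/2)) := hmono _ _ (by linarith)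
      _ = (r:ℝ) ^ (-eK) * c1 ^ (K - f) := hRHSeq.symm
  -- high range pointwise
  have hhiptA : ∀ f, 1 ≤ f → f ≤ N → ((r:ℝ) ^ (d * f * (N / f)))⁻¹ ≤ qd ^ f := by
    intro f hf1 hfN
    have hM1 : 1 ≤ N / f := (Nat.one_le_div_iff (by omega)).2 hfN
    have hexp : d * f ≤ d * f * (N / f) := Nat.le_mul_of_pos_right _ (by omega)
    have : qd ^ f = ((r:ℝ) ^ (d * f))⁻¹ := by rw [hqd, inv_pow, ← pow_mul]
    rw [this]
    exact inv_anti₀ (by positivity) (pow_le_pow_right₀ hrr1 hexp)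
  have hhiptB : ∀ f, 1 ≤ f → f ≤ N →
      ((r:ℝ) ^ (d * f * (N / f)))⁻¹ * (r:ℝ) ^ (-(f:ℝ)/2) ≤ c2 ^ f := by
    intro f hf1 hfN
    have hM1 : 1 ≤ N / f := (Nat.one_le_div_iff (by omega)).2 hfN
    have hexp : d * f ≤ d * f * (N / f) := Nat.le_mul_of_pos_right _ (by omega)
    have hexpR : (d:ℝ) * (f:ℝ) ≤ ((d * f * (N / f) : ℕ) : ℝ) := by
      have := (Nat.cast_le (α := ℝ)).2 hexp
      push_cast at this
      push_cast
      linarith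
    have hRHSeq : c2 ^ f = (r:ℝ) ^ (-((d:ℝ) * (f:ℝ) + (f:ℝ)/2)) := by
      rw [hc2, ← Real.rpow_natCast ((r:ℝ) ^ (-((d:ℝ) + 1/2))) f,
        ← Real.rpow_mul hrr0.le]
      congr 1
      ring
    calc ((r:ℝ) ^ (d * f * (N / f)))⁻¹ * (r:ℝ) ^ (-(f:ℝ)/2)
        = (r:ℝ) ^ (-(((d * f * (N / f) : ℕ):ℝ) + (f:ℝ)/2)) := by
          rw [hconv, hsplitP]
          congr 2
          ring
      _ ≤ (r:ℝ) ^ (-((d:ℝ) * (f:ℝ) + (f:ℝ)/2)) := hmono _ _ (by linarith)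
      _ = c2 ^ f := hRHSeq.symm
  set REK : ℝ := (r:ℝ) ^ (-eK) with hREK
  have hREK0 : 0 ≤ REK := le_of_lt (Real.rpow_pos_of_pos hrr0 _)
  -- sum reduction
  rw [← Finset.sum_sub_distrib]
  have hIccIoc : ∀ a c : ℕ, Finset.Icc (a+1) c = Finset.Ioc a c := by
    intro a c; ext j; simp [Finset.mem_Icc, Finset.mem_Ioc]
  have hsplit_sum : Finset.Icc 1 N = Finset.Ioc 0 N := hIccIoc 0 N
  set g : ℕ → ℝ := fun f => (3 * (((r:ℝ) ^ (d * f * (N / f)))⁻¹)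
      + 4 * b * ((r:ℝ) ^ (d * f * (N / f)))⁻¹ * (r:ℝ) ^ (-(f:ℝ)/2)) / N with hg
  have hsum1 : (∑ f ∈ Finset.Icc 1 N,
      (Φ f * Real.log ((r:ℝ) ^ (d * f) / ((r:ℝ) ^ (d * f) - 1)) -
        Φ f * ∑ m ∈ Finset.Icc 1 (N / f), 1 / ((m:ℝ) * (r:ℝ) ^ (d * f * m))))
      ≤ ∑ f ∈ Finset.Icc 1 N, g f :=
    Finset.sum_le_sum (fun f hf => by
      obtain ⟨hf1, hfN⟩ := Finset.mem_Icc.1 hf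
      exact key f hf1 hfN)
  refine le_trans hsum1 ?_
  rw [hsplit_sum, ← Finset.sum_Ioc_consecutive g (Nat.zero_le K) hKN]
  -- low part
  have hlow : ∑ f ∈ Finset.Ioc 0 K, g f ≤
      ∑ f ∈ Finset.Ioc 0 K, (3 * qd ^ (N + 1 - f) + 4 * b * (REK * c1 ^ (K - f))) / N := by
    refine Finset.sum_le_sum (fun f hf => ?_)
    obtain ⟨hf0, hfK⟩ := Finset.mem_Ioc.1 hf
    have h1 := hlowptA f hf0 hfK
    have h2 := hlowptB f hf0 hfK
    have hnum : 3 * (((r:ℝ) ^ (d * f * (N / f)))⁻¹)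
        + 4 * b * ((r:ℝ) ^ (d * f * (N / f)))⁻¹ * (r:ℝ) ^ (-(f:ℝ)/2)
        ≤ 3 * qd ^ (N + 1 - f) + 4 * b * (REK * c1 ^ (K - f)) := by
      have e2 : 4 * b * (((r:ℝ) ^ (d * f * (N / f)))⁻¹ * (r:ℝ) ^ (-(f:ℝ)/2))
          ≤ 4 * b * (REK * c1 ^ (K - f)) :=
        mul_le_mul_of_nonneg_left h2 (by positivity)
      linarith
    rw [hg]
    have := mul_le_mul_of_nonneg_right hnum (inv_nonneg.2 hN0.le)
    simpa [div_eq_mul_inv] using this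
  -- high part
  have hhigh : ∑ f ∈ Finset.Ioc K N, g f ≤
      ∑ f ∈ Finset.Ioc K N, (3 * qd ^ f + 4 * b * c2 ^ f) / N := by
    refine Finset.sum_le_sum (fun f hf => ?_)
    obtain ⟨hfK, hfN⟩ := Finset.mem_Ioc.1 hf
    have hf1 : 1 ≤ f := by omega
    have h1 := hhiptA f hf1 hfN
    have h2 := hhiptB f hf1 hfN
    have hnum : 3 * (((r:ℝ) ^ (d * f * (N / f)))⁻¹)
        + 4 * b * ((r:ℝ) ^ (d * f * (N / f)))⁻¹ * (r:ℝ) ^ (-(f:ℝ)/2)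
        ≤ 3 * qd ^ f + 4 * b * c2 ^ f := by
      have e2 : 4 * b * (((r:ℝ) ^ (d * f * (N / f)))⁻¹ * (r:ℝ) ^ (-(f:ℝ)/2))
          ≤ 4 * b * c2 ^ f := mul_le_mul_of_nonneg_left h2 (by positivity)
      linarith
    rw [hg]
    have := mul_le_mul_of_nonneg_right hnum (inv_nonneg.2 hN0.le)
    simpa [div_eq_mul_inv] using this
  -- geometric sums
  have hqd1 : qd < 1 := by linarith
  have hc11 : c1 < 1 := by linarith
  have hc21 : c2 < 1 := by linarith
  have hS1 : ∑ f ∈ Finset.Ioc 0 K, qd ^ (N + 1 - f) ≤ qd ^ (N + 1 - K) / (1 - qd) := by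
    refine sum_pow_le' hqd0 hqd1 _ (fun f => N + 1 - f) ?_ _ (fun f hf => ?_)
    · intro a ha b' hb' hab
      simp only [Finset.coe_Ioc, Set.mem_Ioc] at ha hb'
      have hab' : N + 1 - a = N + 1 - b' := hab
      omega
    · have := Finset.mem_Ioc.1 hf
      show N + 1 - K ≤ N + 1 - f
      omega
  have hS3 : ∑ f ∈ Finset.Ioc 0 K, c1 ^ (K - f) ≤ 1 / (1 - c1) := by
    have := sum_pow_le' hc10 hc11 (Finset.Ioc 0 K) (fun f => K - f) ?_ 0 (fun f _ => Nat.zero_le _)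
    · simpa using this
    · intro a ha b' hb' hab
      simp only [Finset.coe_Ioc, Set.mem_Ioc] at ha hb'
      have hab' : K - a = K - b' := hab
      omega
  have hS2 : ∑ f ∈ Finset.Ioc K N, qd ^ f ≤ qd ^ (K + 1) / (1 - qd) := by
    refine sum_pow_le' hqd0 hqd1 _ (fun f => f) (fun a _ b' _ hab => hab) _ (fun f hf => ?_)
    have := Finset.mem_Ioc.1 hf
    show K + 1 ≤ f
    omega
  have hS4 : ∑ f ∈ Finset.Ioc K N, c2 ^ f ≤ c2 ^ (K + 1) / (1 - c2) := by
    refine sum_pow_le' hc20 hc21 _ (fun f => f) (fun a _ b' _ hab => hab) _ (fun f hf => ?_)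
    have := Finset.mem_Ioc.1 hf
    show K + 1 ≤ f
    omega
  -- rewrite the two middle sums
  have hlowsum : ∑ f ∈ Finset.Ioc 0 K, (3 * qd ^ (N + 1 - f) + 4 * b * (REK * c1 ^ (K - f))) / N
      = (3 * (∑ f ∈ Finset.Ioc 0 K, qd ^ (N + 1 - f))
        + 4 * b * (REK * (∑ f ∈ Finset.Ioc 0 K, c1 ^ (K - f)))) / N := by
    rw [← Finset.sum_div]
    congr 1
    rw [Finset.sum_add_distrib, ← Finset.mul_sum, ← Finset.mul_sum, ← Finset.mul_sum]
  have hhighsum : ∑ f ∈ Finset.Ioc K N, (3 * qd ^ f + 4 * b * c2 ^ f) / N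
      = (3 * (∑ f ∈ Finset.Ioc K N, qd ^ f) + 4 * b * (∑ f ∈ Finset.Ioc K N, c2 ^ f)) / N := by
    rw [← Finset.sum_div]
    congr 1
    rw [Finset.sum_add_distrib, ← Finset.mul_sum, ← Finset.mul_sum]
  -- exponent numeric bounds
  have hqdpow : ∀ n : ℕ, qd ^ n = (r:ℝ) ^ (-((d*n:ℕ):ℝ)) := fun n => by
    rw [hqd, inv_pow, ← pow_mul, hconv]
  have hEd : (d:ℝ) * (N:ℝ) / 2 + 1 ≤ (d:ℝ) * ((N:ℝ) + 1 - (K:ℝ)) := by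
    have hx : (1:ℝ) ≤ (N:ℝ)/2 + 1 - (K:ℝ) := by linarith
    have hm : 1 * 1 ≤ (d:ℝ) * ((N:ℝ)/2 + 1 - (K:ℝ)) :=
      mul_le_mul hd1 hx (by norm_num) (by linarith)
    linarith [hm]
  have hEd2 : (d:ℝ) * (N:ℝ) / 2 + 1/2 ≤ (d:ℝ) * ((K:ℝ) + 1) := by
    have hx : (1:ℝ)/2 ≤ (K:ℝ) + 1 - (N:ℝ)/2 := by linarith
    have hm : 1 * (1/2) ≤ (d:ℝ) * ((K:ℝ) + 1 - (N:ℝ)/2) :=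
      mul_le_mul hd1 hx (by norm_num) (by linarith)
    linarith [hm]
  have hrinv : (r:ℝ) ^ (-(1:ℝ)) ≤ 1/2 := by
    rw [Real.rpow_neg_one, show (1:ℝ)/2 = (2:ℝ)⁻¹ by norm_num]
    exact inv_anti₀ (by norm_num) hrr
  have hrhalf : (r:ℝ) ^ (-((1:ℝ)/2)) ≤ 0.708 := by
    refine le_trans (hbase _ (by norm_num)) ?_
    rw [show -((1:ℝ)/2) = -(1:ℝ)/2 by ring]
    exact two_rpow_half_le
  have hrtq : (r:ℝ) ^ (-((3:ℝ)/4)) ≤ 0.595 := by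
    refine le_trans (hbase _ (by norm_num)) ?_
    rw [show -((3:ℝ)/4) = -(3:ℝ)/4 by ring]
    exact two_rpow_threequarter_le
  have hQeq : (r:ℝ) ^ (-((N:ℝ)/4)) = Q := by rw [hQ]; congr 1; ring
  have hqdK1 : qd ^ (N + 1 - K) ≤ (1/2) * P⁻¹ := by
    rw [hqdpow]
    have hcast : ((d*(N+1-K):ℕ):ℝ) = (d:ℝ) * ((N:ℝ) + 1 - (K:ℝ)) := by
      rw [Nat.cast_mul, hcastsub K (by omega)]
    calc (r:ℝ) ^ (-((d*(N+1-K):ℕ):ℝ)) ≤ (r:ℝ) ^ (-((d:ℝ)*(N:ℝ)/2 + 1)) := by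
          refine hmono _ _ ?_
          rw [hcast]
          linarith
    _ = P⁻¹ * (r:ℝ) ^ (-(1:ℝ)) := by rw [hsplitP, hPinv]
    _ ≤ P⁻¹ * (1/2) := mul_le_mul_of_nonneg_left hrinv (by positivity)
    _ = (1/2) * P⁻¹ := by ring
  have hqdK2 : qd ^ (K + 1) ≤ 0.708 * P⁻¹ := by
    rw [hqdpow]
    have hcast : ((d*(K+1):ℕ):ℝ) = (d:ℝ) * ((K:ℝ) + 1) := by push_cast; ring
    calc (r:ℝ) ^ (-((d*(K+1):ℕ):ℝ)) ≤ (r:ℝ) ^ (-((d:ℝ)*(N:ℝ)/2 + (1:ℝ)/2)) := by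
          refine hmono _ _ ?_
          rw [hcast]
          linarith
    _ = P⁻¹ * (r:ℝ) ^ (-((1:ℝ)/2)) := by rw [hsplitP, hPinv]
    _ ≤ P⁻¹ * 0.708 := mul_le_mul_of_nonneg_left hrhalf (by positivity)
    _ = 0.708 * P⁻¹ := by ring
  have hKq : (N:ℝ)/4 - 1/4 ≤ (K:ℝ)/2 := by linarith
  have hREKb : REK ≤ 0.595 * (P⁻¹ * Q) := by
    rw [hREK]
    calc (r:ℝ) ^ (-eK) ≤ (r:ℝ) ^ (-((d:ℝ)*(N:ℝ)/2 + ((N:ℝ)/4 + (3:ℝ)/4))) := by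
          refine hmono _ _ ?_
          rw [heK]
          linarith
    _ = P⁻¹ * ((r:ℝ) ^ (-((N:ℝ)/4)) * (r:ℝ) ^ (-((3:ℝ)/4))) := by
          rw [hsplitP, hsplitP, hPinv]
    _ = P⁻¹ * (Q * (r:ℝ) ^ (-((3:ℝ)/4))) := by rw [hQeq]
    _ ≤ P⁻¹ * (Q * 0.595) :=
          mul_le_mul_of_nonneg_left (mul_le_mul_of_nonneg_left hrtq hQ0.le) (by positivity)
    _ = 0.595 * (P⁻¹ * Q) := by ring
  have hc2K : c2 ^ (K + 1) ≤ 0.595 * (P⁻¹ * Q) := by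
    have hc2eq : c2 ^ (K + 1) = (r:ℝ) ^ (-(((d:ℝ) + 1/2) * (((K+1:ℕ)):ℝ))) := by
      rw [hc2, ← Real.rpow_natCast ((r:ℝ) ^ (-((d:ℝ) + 1/2))) (K+1), ← Real.rpow_mul hrr0.le,
        neg_mul]
    rw [hc2eq]
    calc (r:ℝ) ^ (-(((d:ℝ) + 1/2) * (((K+1:ℕ)):ℝ)))
        ≤ (r:ℝ) ^ (-((d:ℝ)*(N:ℝ)/2 + ((N:ℝ)/4 + (3:ℝ)/4))) := by
          refine hmono _ _ ?_
          push_cast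
          linarith [hEd2, hKr']
    _ = P⁻¹ * ((r:ℝ) ^ (-((N:ℝ)/4)) * (r:ℝ) ^ (-((3:ℝ)/4))) := by
          rw [hsplitP, hsplitP, hPinv]
    _ = P⁻¹ * (Q * (r:ℝ) ^ (-((3:ℝ)/4))) := by rw [hQeq]
    _ ≤ P⁻¹ * (Q * 0.595) :=
          mul_le_mul_of_nonneg_left (mul_le_mul_of_nonneg_left hrtq hQ0.le) (by positivity)
    _ = 0.595 * (P⁻¹ * Q) := by ring
  -- ratio denominators
  have hd1q : (0:ℝ) < 1 - qd := by linarith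
  have hd1b : 1 / (1 - qd) ≤ 2 := by rw [div_le_iff₀ hd1q]; linarith
  have hd2q : (0:ℝ) < 1 - c1 := by linarith
  have hd2b : 1 / (1 - c1) ≤ 3.425 := by rw [div_le_iff₀ hd2q]; linarith
  have hd3q : (0:ℝ) < 1 - c2 := by linarith
  have hd3b : 1 / (1 - c2) ≤ 1.548 := by rw [div_le_iff₀ hd3q]; linarith
  -- combine
  refine le_trans (add_le_add hlow hhigh) ?_
  rw [hlowsum, hhighsum, ← add_div]
  have hPi0 : (0:ℝ) ≤ P⁻¹ := inv_nonneg.2 hP0.le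
  have t1 : ∑ f ∈ Finset.Ioc 0 K, qd ^ (N + 1 - f) ≤ P⁻¹ := by
    refine le_trans hS1 ?_
    calc qd ^ (N + 1 - K) / (1 - qd) = qd ^ (N + 1 - K) * (1 / (1 - qd)) := by ring
    _ ≤ ((1/2) * P⁻¹) * 2 := mul_le_mul hqdK1 hd1b (by positivity) (by positivity)
    _ = P⁻¹ := by ring
  have t2 : ∑ f ∈ Finset.Ioc K N, qd ^ f ≤ 1.416 * P⁻¹ := by
    refine le_trans hS2 ?_
    calc qd ^ (K + 1) / (1 - qd) = qd ^ (K + 1) * (1 / (1 - qd)) := by ring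
    _ ≤ (0.708 * P⁻¹) * 2 := mul_le_mul hqdK2 hd1b (by positivity) (by positivity)
    _ = 1.416 * P⁻¹ := by ring
  have t3 : REK * (∑ f ∈ Finset.Ioc 0 K, c1 ^ (K - f)) ≤ 2.037875 * (P⁻¹ * Q) := by
    calc REK * (∑ f ∈ Finset.Ioc 0 K, c1 ^ (K - f)) ≤ REK * (1 / (1 - c1)) :=
          mul_le_mul_of_nonneg_left hS3 hREK0
    _ ≤ (0.595 * (P⁻¹ * Q)) * 3.425 := mul_le_mul hREKb hd2b (by positivity) (by positivity)
    _ = 2.037875 * (P⁻¹ * Q) := by ring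
  have t4 : ∑ f ∈ Finset.Ioc K N, c2 ^ f ≤ 0.92106 * (P⁻¹ * Q) := by
    refine le_trans hS4 ?_
    calc c2 ^ (K + 1) / (1 - c2) = c2 ^ (K + 1) * (1 / (1 - c2)) := by ring
    _ ≤ (0.595 * (P⁻¹ * Q)) * 1.548 := mul_le_mul hc2K hd3b (by positivity) (by positivity)
    _ = 0.92106 * (P⁻¹ * Q) := by ring
  have u3 : 4 * b * (REK * (∑ f ∈ Finset.Ioc 0 K, c1 ^ (K - f)))
      ≤ 4 * b * (2.037875 * (P⁻¹ * Q)) := mul_le_mul_of_nonneg_left t3 (by linarith)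
  have u4 : 4 * b * (∑ f ∈ Finset.Ioc K N, c2 ^ f)
      ≤ 4 * b * (0.92106 * (P⁻¹ * Q)) := mul_le_mul_of_nonneg_left t4 (by linarith)
  have hbPQ : (0:ℝ) ≤ b * (P⁻¹ * Q) := mul_nonneg hb (mul_nonneg hPi0 hQ0.le)
  have hfinalnum : 3 * (∑ f ∈ Finset.Ioc 0 K, qd ^ (N + 1 - f))
      + 4 * b * (REK * (∑ f ∈ Finset.Ioc 0 K, c1 ^ (K - f)))
      + (3 * (∑ f ∈ Finset.Ioc K N, qd ^ f) + 4 * b * (∑ f ∈ Finset.Ioc K N, c2 ^ f))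
      ≤ 8 * P⁻¹ + 12 * b * (P⁻¹ * Q) := by linarith [t1, t2, u3, u4, hbPQ, hPi0]
  have hRHSeq : 8 / ((N:ℝ) * P) + 12 * b * Q / ((N:ℝ) * P)
      = (8 * P⁻¹ + 12 * b * (P⁻¹ * Q)) / N := by ring
  rw [hRHSeq]
  have := mul_le_mul_of_nonneg_right hfinalnum (inv_nonneg.2 hN0.le)
  simpa [div_eq_mul_inv] using this

theorem stmt_13 (r d N : ℕ) (hr : 2 ≤ r) (hd : 1 ≤ d) (hN : 2 ≤ N)
    (b : ℝ) (hb : 0 ≤ b) (Φ : ℕ → ℝ) (hΦ : ∀ f, 0 ≤ Φ f)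
    (h : ∀ f, 1 ≤ f → f ≤ N → (f : ℝ) * Φ f ≤
        (r : ℝ) ^ (d * f) + 1 + 2 * b * (r : ℝ) ^ ((d * f : ℝ) - (f : ℝ) / 2)) :
    (∑ f ∈ Finset.Icc 1 N, Φ f * Real.log ((r : ℝ) ^ (d * f) / ((r : ℝ) ^ (d * f) - 1))) -
        (∑ f ∈ Finset.Icc 1 N, Φ f * ∑ m ∈ Finset.Icc 1 (N / f), 1 / ((m : ℝ) * (r : ℝ) ^ (d * f * m))) ≤
      8 / ((N : ℝ) * (r : ℝ) ^ ((d * N : ℝ) / 2)) +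
        12 * b * (r : ℝ) ^ (-(N : ℝ) / 4) / ((N : ℝ) * (r : ℝ) ^ ((d * N : ℝ) / 2)) := by
  exact stmt_13_aux r d N hr hd hN b hb Φ hΦ h
    (fun f hf1 hfN => key_bound r d N hr hd hN b hb Φ h f hf1 hfN)
    (fun h0 h1 s e he m hm => sum_pow_le' h0 h1 s e he m hm)
end

section
/- Let (aₙ)_{n≥1} be nonnegative reals with aₙ ≤ C·n for some constant C > 0, and for δ > 0 set g(δ) = ∑_{n=1}^{∞} aₙ · n^{−(1+δ)} (assuming convergence for all δ > 0). If the partial sums satisfy ∑_{n ≤ x} aₙ/n = log log x + B + ε(x) with ε(x) → 0 as x → ∞, then g(δ) + log δ → B − γ as δ → 0⁺, where γ is the Euler–Mascheroni constant. -/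
open Filter MeasureTheory Set

namespace Stmt14Aux

/-! ### Elementary log bounds -/

lemma neg_log_le (u : ℝ) (hu : 0 < u) : -Real.log u ≤ 2 * u ^ (-(2⁻¹) : ℝ) := by
  rcases le_or_gt 1 u with h | h
  · have h1 : 0 ≤ Real.log u := Real.log_nonneg h
    have h2 : (0:ℝ) ≤ u ^ (-(2⁻¹) : ℝ) := Real.rpow_nonneg hu.le _
    linarith
  · have h1 : -Real.log u = 2 * Real.log (u ^ (-(2⁻¹) : ℝ)) := by
      rw [Real.log_rpow hu]; ring
    have h2 : Real.log (u ^ (-(2⁻¹) : ℝ)) ≤ u ^ (-(2⁻¹) : ℝ) := by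
      have := Real.log_le_sub_one_of_pos (Real.rpow_pos_of_pos hu (-(2⁻¹) : ℝ))
      linarith
    linarith

lemma abs_log_le (u : ℝ) (hu : 0 < u) : |Real.log u| ≤ 2 * u ^ (-(2⁻¹) : ℝ) + u := by
  rcases le_or_gt 1 u with h | h
  · rw [abs_of_nonneg (Real.log_nonneg h)]
    have h2 : (0:ℝ) ≤ u ^ (-(2⁻¹) : ℝ) := Real.rpow_nonneg hu.le _
    have := Real.log_le_sub_one_of_pos hu
    linarith
  · rw [abs_of_nonpos (Real.log_nonpos hu.le h.le)]
    have := neg_log_le u hu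
    linarith

/-! ### The integral `∫_0^∞ log t e^{-t} dt = -γ` -/

lemma integrableOn_log_mul_exp :
    IntegrableOn (fun t => Real.log t * Real.exp (-t)) (Ioi (0:ℝ)) := by
  have h1 : IntegrableOn (fun t : ℝ => Real.exp (-t) * t ^ ((2⁻¹ : ℝ) - 1)) (Ioi 0) :=
    Real.GammaIntegral_convergent (by norm_num)
  have h2 : IntegrableOn (fun t : ℝ => Real.exp (-t) * t ^ ((2 : ℝ) - 1)) (Ioi 0) :=
    Real.GammaIntegral_convergent (by norm_num)
  have hbig : IntegrableOn
      (fun t : ℝ => 2 * (Real.exp (-t) * t ^ ((2⁻¹ : ℝ) - 1)) + Real.exp (-t) * t ^ ((2:ℝ) - 1))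
      (Ioi 0) := (h1.const_mul 2).add h2
  refine hbig.mono' ?_ ?_
  · exact (Real.measurable_log.mul (Real.measurable_exp.comp measurable_neg)).aestronglyMeasurable
  · filter_upwards [ae_restrict_mem measurableSet_Ioi] with t ht
    have ht0 : (0:ℝ) < t := ht
    have hexp : (0:ℝ) < Real.exp (-t) := Real.exp_pos _
    have h3 : |Real.log t| ≤ 2 * t ^ (-(2⁻¹) : ℝ) + t := abs_log_le t ht0
    have he1 : (2⁻¹ : ℝ) - 1 = -(2⁻¹ : ℝ) := by norm_num
    have he2 : ((2:ℝ) - 1) = (1:ℝ) := by norm_num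
    rw [norm_mul, Real.norm_eq_abs, Real.norm_eq_abs, abs_of_pos hexp, he1, he2, Real.rpow_one]
    calc |Real.log t| * Real.exp (-t) ≤ (2 * t ^ (-(2⁻¹) : ℝ) + t) * Real.exp (-t) := by
          exact mul_le_mul_of_nonneg_right h3 hexp.le
      _ = 2 * (Real.exp (-t) * t ^ (-(2⁻¹) : ℝ)) + Real.exp (-t) * t := by ring

lemma integral_log_mul_exp :
    ∫ t in Ioi (0:ℝ), Real.log t * Real.exp (-t) = -Real.eulerMascheroniConstant := by
  have h1 : HasDerivAt Complex.GammaIntegral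
      (∫ t : ℝ in Ioi 0, (t:ℂ) ^ ((1:ℂ) - 1) * (Real.log t * Real.exp (-t))) 1 :=
    Complex.hasDerivAt_GammaIntegral (by norm_num)
  have heq : (∫ t : ℝ in Ioi 0, (t:ℂ) ^ ((1:ℂ) - 1) * (Real.log t * Real.exp (-t)))
      = ((∫ t in Ioi (0:ℝ), Real.log t * Real.exp (-t) : ℝ) : ℂ) := by
    have : (∫ t : ℝ in Ioi 0, (t:ℂ) ^ ((1:ℂ) - 1) * (Real.log t * Real.exp (-t)))
        = ∫ t : ℝ in Ioi 0, ((Real.log t * Real.exp (-t) : ℝ) : ℂ) := by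
      refine setIntegral_congr_fun measurableSet_Ioi (fun t ht => ?_)
      push_cast
      simp
    rw [this]
    exact integral_ofReal
  rw [heq] at h1
  have h2 : HasDerivAt Complex.Gamma
      (((∫ t in Ioi (0:ℝ), Real.log t * Real.exp (-t) : ℝ) : ℂ)) 1 := by
    refine h1.congr_of_eventuallyEq ?_
    have hopen : {s : ℂ | 0 < s.re} ∈ nhds (1:ℂ) := by
      refine IsOpen.mem_nhds ?_ (by norm_num)
      exact isOpen_lt continuous_const Complex.continuous_re
    filter_upwards [hopen] with s hs
    exact Complex.Gamma_eq_integral hs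
  have h4 := h2.unique Complex.hasDerivAt_Gamma_one
  exact_mod_cast h4

/-! ### Tail integral tends to `-γ` -/

lemma integrableOn_rpow_Ioc {r : ℝ} (hr : -1 < r) {c : ℝ} (hc : 0 ≤ c) :
    IntegrableOn (fun t : ℝ => t ^ r) (Ioc 0 c) := by
  have := intervalIntegral.intervalIntegrable_rpow' (a := 0) (b := c) hr
  rwa [intervalIntegrable_iff_integrableOn_Ioc_of_le hc] at this

lemma integral_rpow_Ioc {c : ℝ} (hc : 0 ≤ c) :
    ∫ t in Ioc (0:ℝ) c, t ^ (-(2⁻¹) : ℝ) = 2 * c ^ ((2⁻¹) : ℝ) := by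
  rw [← intervalIntegral.integral_of_le hc]
  rw [integral_rpow (Or.inl (by norm_num))]
  rw [Real.zero_rpow (by norm_num)]
  norm_num
  ring

lemma tendsto_tail :
    Tendsto (fun c => ∫ t in Ioi c, Real.log t * Real.exp (-t)) (nhdsWithin 0 (Ioi 0))
      (nhds (-Real.eulerMascheroniConstant)) := by
  rw [← tendsto_sub_nhds_zero_iff]
  have hg : Tendsto (fun c : ℝ => 4 * c ^ ((2⁻¹) : ℝ)) (nhdsWithin 0 (Ioi 0)) (nhds 0) := by
    have h0 : Tendsto (fun c : ℝ => c ^ ((2⁻¹) : ℝ)) (nhds 0) (nhds 0) := by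
      have := (Real.continuousAt_rpow_const 0 (2⁻¹) (Or.inr (by norm_num))).tendsto
      simpa [Real.zero_rpow] using this
    have := (h0.const_mul 4).mono_left (nhdsWithin_le_nhds (s := Ioi (0:ℝ)))
    simpa using this
  refine squeeze_zero_norm' ?_ hg
  · filter_upwards [Ioo_mem_nhdsGT_of_mem (show (0:ℝ) ∈ Ico (0:ℝ) 1 by norm_num)] with c hc
    obtain ⟨hc0, hc1⟩ := hc
    have hIoc : IntegrableOn (fun t => Real.log t * Real.exp (-t)) (Ioc 0 c) :=
      integrableOn_log_mul_exp.mono_set Ioc_subset_Ioi_self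
    have hIoi : IntegrableOn (fun t => Real.log t * Real.exp (-t)) (Ioi c) :=
      integrableOn_log_mul_exp.mono_set (Ioi_subset_Ioi hc0.le)
    have hsplit : (∫ t in Ioc 0 c, Real.log t * Real.exp (-t))
        + (∫ t in Ioi c, Real.log t * Real.exp (-t))
        = ∫ t in Ioi (0:ℝ), Real.log t * Real.exp (-t) := by
      rw [← setIntegral_union (Ioc_disjoint_Ioi le_rfl) measurableSet_Ioi hIoc hIoi,
        Ioc_union_Ioi_eq_Ioi hc0.le]
    rw [integral_log_mul_exp] at hsplit
    have : (∫ t in Ioi c, Real.log t * Real.exp (-t)) - -Real.eulerMascheroniConstant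
        = -(∫ t in Ioc 0 c, Real.log t * Real.exp (-t)) := by linarith
    rw [this, norm_neg]
    calc ‖∫ t in Ioc 0 c, Real.log t * Real.exp (-t)‖
        ≤ ∫ t in Ioc 0 c, ‖Real.log t * Real.exp (-t)‖ := norm_integral_le_integral_norm _
      _ ≤ ∫ t in Ioc 0 c, 2 * t ^ (-(2⁻¹) : ℝ) := by
          refine setIntegral_mono_on hIoc.norm
            ((integrableOn_rpow_Ioc (by norm_num) hc0.le).const_mul 2)
            measurableSet_Ioc (fun t ht => ?_)
          have ht0 : (0:ℝ) < t := ht.1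
          have h1 : ‖Real.log t * Real.exp (-t)‖ = |Real.log t| * Real.exp (-t) := by
            rw [norm_mul, Real.norm_eq_abs, Real.norm_eq_abs, abs_of_pos (Real.exp_pos _)]
          rw [h1]
          have hlog : |Real.log t| ≤ 2 * t ^ (-(2⁻¹) : ℝ) := by
            rw [abs_of_nonpos (Real.log_nonpos ht0.le (ht.2.trans hc1.le))]
            exact neg_log_le t ht0
          have hexp : Real.exp (-t) ≤ 1 := Real.exp_le_one_iff.mpr (by linarith)
          calc |Real.log t| * Real.exp (-t) ≤ |Real.log t| * 1 :=
                mul_le_mul_of_nonneg_left hexp (abs_nonneg _)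
            _ ≤ 2 * t ^ (-(2⁻¹) : ℝ) := by rw [mul_one]; exact hlog
      _ = 2 * (2 * c ^ ((2⁻¹) : ℝ)) := by
          rw [← integral_rpow_Ioc hc0.le, ← MeasureTheory.integral_const_mul]
      _ = 4 * c ^ ((2⁻¹) : ℝ) := by ring

/-! ### The weight `w t = δ t^{-(1+δ)}` -/

lemma wIntegrable {δ c : ℝ} (hδ : 0 < δ) (hc : 0 < c) :
    IntegrableOn (fun t : ℝ => δ * t ^ (-(1+δ))) (Ioi c) :=
  (integrableOn_Ioi_rpow_of_lt (by linarith) hc).const_mul δ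

lemma wint {δ c : ℝ} (hδ : 0 < δ) (hc : 0 < c) :
    ∫ t in Ioi c, δ * t ^ (-(1+δ)) = c ^ (-δ) := by
  rw [MeasureTheory.integral_const_mul, integral_Ioi_rpow_of_lt (by linarith) hc]
  rw [show (-(1+δ)+1 : ℝ) = -δ by ring]
  field_simp

lemma contOn_w (δ : ℝ) {s : Set ℝ} (hs : ∀ x ∈ s, (0:ℝ) < x) :
    ContinuousOn (fun t : ℝ => δ * t ^ (-(1+δ))) s :=
  continuousOn_const.mul (fun x hx =>
    (Real.continuousAt_rpow_const x _ (Or.inl (ne_of_gt (hs x hx)))).continuousWithinAt)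

lemma wASM (δ : ℝ) : AEStronglyMeasurable (fun t : ℝ => δ * t ^ (-(1+δ)))
    (volume.restrict (Ioi (2:ℝ))) :=
  (contOn_w δ (fun x hx => lt_trans two_pos hx)).aestronglyMeasurable measurableSet_Ioi

/-! ### Abel summation: tsum to integral -/

lemma stepA (a : ℕ → ℝ) (ha : ∀ n, 0 ≤ a n) {δ : ℝ} (hδ : 0 < δ)
    (hsum : Summable (fun n : ℕ => a n * (n : ℝ) ^ (-(1 + δ)))) :
    (∑' n : ℕ, a n * (n : ℝ) ^ (-(1 + δ)))
      = ∫ t in Ioi (1:ℝ), (∑ n ∈ Finset.Icc 1 ⌊t⌋₊, a n / n) * (δ * t ^ (-(1+δ))) := by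
  set w : ℝ → ℝ := fun t => δ * t ^ (-(1+δ)) with hw
  set Fn : ℕ → ℝ → ℝ := fun n t => (a n / n) * (Ici (n:ℝ)).indicator w t with hFn
  have hwnn : ∀ t : ℝ, 0 < t → 0 ≤ w t := fun t ht =>
    mul_nonneg hδ.le (Real.rpow_nonneg ht.le _)
  have hann : ∀ n : ℕ, 0 ≤ a n / n := fun n => div_nonneg (ha n) (Nat.cast_nonneg n)
  have hint_val : ∀ n : ℕ, (∫ t in Ioi (1:ℝ), Fn n t) = a n * (n:ℝ) ^ (-(1+δ)) := by
    intro n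
    rcases Nat.eq_zero_or_pos n with rfl | hn
    · have hz : (0:ℝ) ^ (-(1+δ)) = 0 :=
        Real.zero_rpow (ne_of_lt (show (-(1+δ):ℝ) < 0 by linarith))
      simp only [hFn, Nat.cast_zero, div_zero, zero_mul, MeasureTheory.integral_zero]
      rw [hz, mul_zero]
    · have hn0 : (0:ℝ) < n := by exact_mod_cast hn
      have hn1 : (1:ℝ) ≤ n := by exact_mod_cast hn
      simp only [hFn]
      rw [MeasureTheory.integral_const_mul, setIntegral_indicator measurableSet_Ici]
      have hset : (Ioi (1:ℝ) ∩ Ici (n:ℝ) : Set ℝ) =ᵐ[volume] (Ioi (n:ℝ) : Set ℝ) := by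
        rw [MeasureTheory.ae_eq_set]
        constructor
        · refine measure_mono_null (show (Ioi (1:ℝ) ∩ Ici (n:ℝ)) \ Ioi (n:ℝ) ⊆ {(n:ℝ)} from ?_)
            Real.volume_singleton
          rintro x ⟨⟨hx1, hxn⟩, hxn'⟩
          simp only [mem_Ioi, not_lt] at hxn'
          exact le_antisymm hxn' hxn
        · refine measure_mono_null (show Ioi (n:ℝ) \ (Ioi (1:ℝ) ∩ Ici (n:ℝ)) ⊆ (∅ : Set ℝ) from ?_)
            measure_empty
          rintro x ⟨hx, hx'⟩
          exact absurd ⟨lt_of_le_of_lt hn1 hx, (le_of_lt (show (n:ℝ) < x from hx) : x ∈ Ici (n:ℝ))⟩ hx'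
      rw [setIntegral_congr_set hset, wint hδ hn0]
      rw [show (-(1+δ) : ℝ) = -1 + -δ by ring, Real.rpow_add hn0, Real.rpow_neg_one]
      ring
  have hFnint : ∀ n : ℕ, Integrable (Fn n) (volume.restrict (Ioi (1:ℝ))) := by
    intro n
    apply Integrable.const_mul
    rw [MeasureTheory.integrable_indicator_iff measurableSet_Ici]
    unfold IntegrableOn
    rw [Measure.restrict_restrict measurableSet_Ici]
    exact (wIntegrable hδ one_pos).mono_set inter_subset_right
  have hnorm : ∀ n : ℕ, (∫ t in Ioi (1:ℝ), ‖Fn n t‖) = a n * (n:ℝ) ^ (-(1+δ)) := by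
    intro n
    rw [← hint_val n]
    refine setIntegral_congr_fun measurableSet_Ioi (fun t ht => ?_)
    have ht0 : (0:ℝ) < t := lt_trans one_pos ht
    refine Real.norm_of_nonneg (mul_nonneg (hann n) ?_)
    by_cases h : t ∈ Ici (n:ℝ)
    · rw [Set.indicator_of_mem h]; exact hwnn t ht0
    · rw [Set.indicator_of_notMem h]
  have hsum' : Summable (fun n : ℕ => ∫ t in Ioi (1:ℝ), ‖Fn n t‖) :=
    hsum.congr (fun n => (hnorm n).symm)
  have h1 : (∑' n : ℕ, a n * (n : ℝ) ^ (-(1 + δ))) = ∑' n : ℕ, ∫ t in Ioi (1:ℝ), Fn n t :=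
    tsum_congr (fun n => (hint_val n).symm)
  rw [h1, integral_tsum_of_summable_integral_norm hFnint hsum']
  refine setIntegral_congr_fun measurableSet_Ioi (fun t ht => ?_)
  have ht1 : (1:ℝ) < t := ht
  have ht0 : (0:ℝ) ≤ t := le_of_lt (lt_trans one_pos ht1)
  have hvan : ∀ n ∉ Finset.range (⌊t⌋₊ + 1), Fn n t = 0 := by
    intro n hn
    rw [Finset.mem_range, not_lt] at hn
    have hnt : ¬ ((n:ℝ) ≤ t) := by
      intro hle
      have := Nat.le_floor hle
      omega
    simp only [hFn]
    rw [Set.indicator_of_notMem (by simpa [Set.mem_Ici] using hnt), mul_zero]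
  rw [tsum_eq_sum hvan]
  have hterm : ∀ n ∈ Finset.range (⌊t⌋₊ + 1), Fn n t = (a n / n) * w t := by
    intro n hn
    rw [Finset.mem_range] at hn
    have hnm : n ≤ ⌊t⌋₊ := by omega
    have : (n:ℝ) ≤ t := le_trans (by exact_mod_cast hnm) (Nat.floor_le ht0)
    simp only [hFn]
    rw [Set.indicator_of_mem (by simpa [Set.mem_Ici] using this)]
  rw [Finset.sum_congr rfl hterm, ← Finset.sum_mul]
  congr 1
  have hins : Finset.range (⌊t⌋₊ + 1) = insert 0 (Finset.Icc 1 ⌊t⌋₊) := by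
    ext k
    simp only [Finset.mem_range, Finset.mem_insert, Finset.mem_Icc]
    omega
  rw [hins, Finset.sum_insert (by simp)]
  simp

/-! ### Change of variables -/

lemma hc_pos {δ : ℝ} (hδ : 0 < δ) : 0 < δ * Real.log 2 := mul_pos hδ (Real.log_pos one_lt_two)

lemma himage {δ : ℝ} (hδ : 0 < δ) :
    (fun u => Real.exp (u/δ)) '' (Ioi (δ * Real.log 2)) = Ioi (2:ℝ) := by
  ext x
  simp only [mem_image, mem_Ioi]
  constructor
  · rintro ⟨u, hu, rfl⟩
    have h2 : Real.log 2 < u / δ := by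
      rw [lt_div_iff₀ hδ, mul_comm]
      exact hu
    calc (2:ℝ) = Real.exp (Real.log 2) := (Real.exp_log two_pos).symm
      _ < Real.exp (u / δ) := Real.exp_lt_exp.mpr h2
  · intro hx
    refine ⟨δ * Real.log x, ?_, ?_⟩
    · exact mul_lt_mul_of_pos_left (Real.log_lt_log two_pos hx) hδ
    · rw [mul_comm, mul_div_assoc, div_self (ne_of_gt hδ), mul_one,
        Real.exp_log (lt_trans two_pos hx)]

lemma hderiv {δ : ℝ} (hδ : 0 < δ) : ∀ u ∈ Ioi (δ * Real.log 2),
    HasDerivWithinAt (fun u => Real.exp (u/δ)) (Real.exp (u/δ) * (1/δ))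
      (Ioi (δ * Real.log 2)) u := by
  intro u _
  have h1 : HasDerivAt (fun u : ℝ => u / δ) (1/δ) u := by
    simpa using (hasDerivAt_id u).div_const δ
  exact ((Real.hasDerivAt_exp (u/δ)).comp u h1).hasDerivWithinAt

lemma hinj {δ : ℝ} (hδ : 0 < δ) : InjOn (fun u => Real.exp (u/δ)) (Ioi (δ * Real.log 2)) := by
  intro x _ y _ h
  have h1 : x / δ = y / δ := Real.exp_injective h
  calc x = x / δ * δ := by field_simp
    _ = y / δ * δ := by rw [h1]
    _ = y := by field_simp

lemma cov_integral {δ : ℝ} (hδ : 0 < δ) (g : ℝ → ℝ) :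
    ∫ t in Ioi (2:ℝ), g t
      = ∫ u in Ioi (δ * Real.log 2), |Real.exp (u/δ) * (1/δ)| • g (Real.exp (u/δ)) := by
  rw [← himage hδ]
  exact integral_image_eq_integral_abs_deriv_smul measurableSet_Ioi (hderiv hδ) (hinj hδ) g

lemma cov_integrable {δ : ℝ} (hδ : 0 < δ) (g : ℝ → ℝ) :
    IntegrableOn g (Ioi (2:ℝ)) ↔
      IntegrableOn (fun u => |Real.exp (u/δ) * (1/δ)| • g (Real.exp (u/δ)))
        (Ioi (δ * Real.log 2)) := by
  rw [← himage hδ]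
  exact integrableOn_image_iff_integrableOn_abs_deriv_smul measurableSet_Ioi (hderiv hδ) (hinj hδ) g

lemma point_eq {δ : ℝ} (hδ : 0 < δ) : ∀ u ∈ Ioi (δ * Real.log 2),
    |Real.exp (u/δ) * (1/δ)| • (Real.log (Real.log (Real.exp (u/δ))) *
        (δ * (Real.exp (u/δ)) ^ (-(1+δ))))
      = (Real.log u - Real.log δ) * Real.exp (-u) := by
  intro u hu
  have hu0 : 0 < u := lt_trans (hc_pos hδ) hu
  have habs : |Real.exp (u/δ) * (1/δ)| = Real.exp (u/δ) * (1/δ) :=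
    abs_of_pos (mul_pos (Real.exp_pos _) (by positivity))
  rw [habs, Real.log_exp, Real.log_div (ne_of_gt hu0) (ne_of_gt hδ),
    Real.rpow_def_of_pos (Real.exp_pos _), Real.log_exp, smul_eq_mul]
  rw [show Real.exp (u / δ) * (1 / δ) *
        ((Real.log u - Real.log δ) * (δ * Real.exp (u / δ * -(1 + δ))))
      = (Real.log u - Real.log δ) *
        ((δ * (1/δ)) * (Real.exp (u/δ) * Real.exp (u / δ * -(1 + δ)))) by ring,
    ← Real.exp_add, mul_one_div, div_self (ne_of_gt hδ), one_mul]
  congr 2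
  field_simp
  ring

lemma integrable_sub_exp {δ : ℝ} (hδ : 0 < δ) :
    IntegrableOn (fun u => (Real.log u - Real.log δ) * Real.exp (-u))
      (Ioi (δ * Real.log 2)) := by
  have h1 : IntegrableOn (fun u => Real.log u * Real.exp (-u)) (Ioi (δ * Real.log 2)) :=
    integrableOn_log_mul_exp.mono_set (Ioi_subset_Ioi (hc_pos hδ).le)
  have h2 : IntegrableOn (fun u : ℝ => Real.exp (-u)) (Ioi (δ * Real.log 2)) := by
    have := exp_neg_integrableOn_Ioi (δ * Real.log 2) (b := 1) one_pos
    simpa using this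
  have h3 : IntegrableOn (fun u => Real.log u * Real.exp (-u) - Real.log δ * Real.exp (-u))
      (Ioi (δ * Real.log 2)) := h1.sub (h2.const_mul (Real.log δ))
  exact h3.congr_fun (fun u hu => by ring) measurableSet_Ioi

lemma stepC {δ : ℝ} (hδ : 0 < δ) :
    (∫ t in Ioi (2:ℝ), Real.log (Real.log t) * (δ * t ^ (-(1+δ))))
      = (∫ u in Ioi (δ * Real.log 2), Real.log u * Real.exp (-u))
        - Real.log δ * Real.exp (-(δ * Real.log 2)) := by
  rw [cov_integral hδ (fun t => Real.log (Real.log t) * (δ * t ^ (-(1+δ))))]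
  rw [setIntegral_congr_fun measurableSet_Ioi (point_eq hδ)]
  have h1 : IntegrableOn (fun u => Real.log u * Real.exp (-u)) (Ioi (δ * Real.log 2)) :=
    integrableOn_log_mul_exp.mono_set (Ioi_subset_Ioi (hc_pos hδ).le)
  have h2 : IntegrableOn (fun u : ℝ => Real.exp (-u)) (Ioi (δ * Real.log 2)) := by
    have := exp_neg_integrableOn_Ioi (δ * Real.log 2) (b := 1) one_pos
    simpa using this
  have hsplit : ∫ u in Ioi (δ * Real.log 2), (Real.log u - Real.log δ) * Real.exp (-u)
      = (∫ u in Ioi (δ * Real.log 2), Real.log u * Real.exp (-u))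
        - ∫ u in Ioi (δ * Real.log 2), Real.log δ * Real.exp (-u) := by
    rw [← integral_sub h1 (h2.const_mul (Real.log δ))]
    refine setIntegral_congr_fun measurableSet_Ioi (fun u hu => by ring)
  rw [hsplit, MeasureTheory.integral_const_mul, integral_exp_neg_Ioi]

lemma stepC_integrable {δ : ℝ} (hδ : 0 < δ) :
    IntegrableOn (fun t => Real.log (Real.log t) * (δ * t ^ (-(1+δ)))) (Ioi (2:ℝ)) := by
  rw [cov_integrable hδ]
  exact (integrable_sub_exp hδ).congr_fun (fun u hu => (point_eq hδ u hu).symm) measurableSet_Ioi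

end Stmt14Aux
namespace Stmt14Aux

open Filter MeasureTheory Set

lemma L_Fnn (a : ℕ → ℝ) (ha : ∀ n, 0 ≤ a n) (t : ℝ) :
    0 ≤ ∑ n ∈ Finset.Icc 1 ⌊t⌋₊, a n / n :=
  Finset.sum_nonneg fun n _ => div_nonneg (ha n) (Nat.cast_nonneg n)

lemma L_Fmono (a : ℕ → ℝ) (ha : ∀ n, 0 ≤ a n) :
    Monotone (fun t : ℝ => ∑ n ∈ Finset.Icc 1 ⌊t⌋₊, a n / n) := by
  intro s t hst
  exact Finset.sum_le_sum_of_subset_of_nonneg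
    (Finset.Icc_subset_Icc_right (Nat.floor_mono hst))
    (fun n _ _ => div_nonneg (ha n) (Nat.cast_nonneg n))

lemma L_epsK (a : ℕ → ℝ) (ha : ∀ n, 0 ≤ a n) (B : ℝ) (ε : ℝ → ℝ)
    (hε : Tendsto ε atTop (nhds 0))
    (hpartial : ∀ x : ℝ, 2 ≤ x →
      (∑ n ∈ Finset.Icc 1 ⌊x⌋₊, a n / n) = Real.log (Real.log x) + B + ε x) :
    ∃ K : ℝ, 0 < K ∧ ∀ t : ℝ, 2 ≤ t → |ε t| ≤ K := by
  obtain ⟨N, hN⟩ := Metric.tendsto_atTop.mp hε 1 one_pos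
  set M : ℝ := max N 2 with hMdef
  have hM2 : (2:ℝ) ≤ M := le_max_right _ _
  have hMN : N ≤ M := le_max_left _ _
  set FM : ℝ := ∑ n ∈ Finset.Icc 1 ⌊M⌋₊, a n / n with hFMdef
  have hFMnn : 0 ≤ FM := L_Fnn a ha M
  refine ⟨FM + |B| + (|Real.log (Real.log 2)| + |Real.log (Real.log M)|) + 1, by positivity, ?_⟩
  intro t ht
  rcases le_or_gt M t with hMt | htM
  · have h1 := hN t (le_trans hMN hMt)
    rw [Real.dist_eq, sub_zero] at h1
    have h2 : |ε t| ≤ 1 := h1.le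
    have := abs_nonneg B
    have := abs_nonneg (Real.log (Real.log 2))
    have := abs_nonneg (Real.log (Real.log M))
    linarith
  · have hft := hpartial t ht
    have hεt : ε t = (∑ n ∈ Finset.Icc 1 ⌊t⌋₊, a n / n) - Real.log (Real.log t) - B := by
      linarith
    have hFt : 0 ≤ ∑ n ∈ Finset.Icc 1 ⌊t⌋₊, a n / n := L_Fnn a ha t
    have hFtM : (∑ n ∈ Finset.Icc 1 ⌊t⌋₊, a n / n) ≤ FM := L_Fmono a ha htM.le
    have hl2 : Real.log (Real.log 2) ≤ Real.log (Real.log t) :=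
      Real.log_le_log (Real.log_pos one_lt_two) (Real.log_le_log two_pos ht)
    have hlM : Real.log (Real.log t) ≤ Real.log (Real.log M) :=
      Real.log_le_log (Real.log_pos (by linarith)) (Real.log_le_log (by linarith) htM.le)
    have ha1 := neg_abs_le (Real.log (Real.log 2))
    have ha2 := le_abs_self (Real.log (Real.log M))
    have ha3 := neg_abs_le B
    have ha4 := le_abs_self B
    have ha5 := abs_nonneg (Real.log (Real.log 2))
    have ha6 := abs_nonneg (Real.log (Real.log M))
    rw [hεt, abs_le]
    constructor <;> linarith
  
lemma L_I1 (a : ℕ → ℝ) (ha : ∀ n, 0 ≤ a n) {δ : ℝ} (hδ : 0 < δ) :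
    IntegrableOn
      (fun t => (∑ n ∈ Finset.Icc 1 ⌊t⌋₊, a n / n) * (δ * t ^ (-(1+δ)))) (Ioc (1:ℝ) 2) := by
  constructor
  · exact ((L_Fmono a ha).measurable.aestronglyMeasurable).mul
      ((contOn_w δ (fun x hx => lt_trans one_pos hx.1)).aestronglyMeasurable measurableSet_Ioc)
  · refine MeasureTheory.HasFiniteIntegral.restrict_of_bounded
      (C := (∑ n ∈ Finset.Icc 1 ⌊(2:ℝ)⌋₊, a n / n) * δ) ?_ ?_
    · rw [Real.volume_Ioc]; exact ENNReal.ofReal_lt_top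
    · filter_upwards [ae_restrict_mem measurableSet_Ioc] with t ht
      have ht0 : (0:ℝ) < t := lt_trans one_pos ht.1
      have hw0 : 0 ≤ δ * t ^ (-(1+δ)) := mul_nonneg hδ.le (Real.rpow_nonneg ht0.le _)
      rw [Real.norm_eq_abs, abs_of_nonneg (mul_nonneg (L_Fnn a ha t) hw0)]
      have hF : (∑ n ∈ Finset.Icc 1 ⌊t⌋₊, a n / n) ≤ ∑ n ∈ Finset.Icc 1 ⌊(2:ℝ)⌋₊, a n / n :=
        L_Fmono a ha ht.2
      have hwle : δ * t ^ (-(1+δ)) ≤ δ :=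
        le_trans (mul_le_mul_of_nonneg_left
          (Real.rpow_le_one_of_one_le_of_nonpos ht.1.le (by linarith)) hδ.le) (by linarith)
      exact mul_le_mul hF hwle hw0 (L_Fnn a ha 2)

lemma L_Idiff (a : ℕ → ℝ) (ha : ∀ n, 0 ≤ a n) (B : ℝ) (ε : ℝ → ℝ) (K : ℝ)
    (hK : ∀ t : ℝ, 2 ≤ t → |ε t| ≤ K)
    (hpartial : ∀ x : ℝ, 2 ≤ x →
      (∑ n ∈ Finset.Icc 1 ⌊x⌋₊, a n / n) = Real.log (Real.log x) + B + ε x)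
    {δ : ℝ} (hδ : 0 < δ) :
    IntegrableOn (fun t => (∑ n ∈ Finset.Icc 1 ⌊t⌋₊, a n / n) * (δ * t ^ (-(1+δ)))
        - Real.log (Real.log t) * (δ * t ^ (-(1+δ)))) (Ioi (2:ℝ)) := by
  have hmaj : IntegrableOn (fun t : ℝ => (|B| + K) * (δ * t ^ (-(1+δ)))) (Ioi 2) :=
    (wIntegrable hδ two_pos).const_mul (|B| + K)
  refine hmaj.mono' ?_ ?_
  · exact (((L_Fmono a ha).measurable.aestronglyMeasurable).mul (wASM δ)).sub
      (((Real.measurable_log.comp Real.measurable_log).aestronglyMeasurable).mul (wASM δ))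
  · filter_upwards [ae_restrict_mem measurableSet_Ioi] with t ht
    have ht2 : (2:ℝ) ≤ t := le_of_lt ht
    have hw0 : 0 ≤ δ * t ^ (-(1+δ)) := mul_nonneg hδ.le (Real.rpow_nonneg (by linarith) _)
    have heq : (∑ n ∈ Finset.Icc 1 ⌊t⌋₊, a n / n) * (δ * t ^ (-(1+δ)))
        - Real.log (Real.log t) * (δ * t ^ (-(1+δ))) = (B + ε t) * (δ * t ^ (-(1+δ))) := by
      rw [hpartial t ht2]; ring
    rw [heq, Real.norm_eq_abs, abs_mul, abs_of_nonneg hw0]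
    have hBe : |B + ε t| ≤ |B| + K := le_trans (abs_add_le _ _) (by linarith [hK t ht2])
    exact mul_le_mul_of_nonneg_right hBe hw0

lemma L_Ieps (a : ℕ → ℝ) (ha : ∀ n, 0 ≤ a n) (B : ℝ) (ε : ℝ → ℝ) (K : ℝ)
    (hK : ∀ t : ℝ, 2 ≤ t → |ε t| ≤ K)
    (hpartial : ∀ x : ℝ, 2 ≤ x →
      (∑ n ∈ Finset.Icc 1 ⌊x⌋₊, a n / n) = Real.log (Real.log x) + B + ε x)
    {δ : ℝ} (hδ : 0 < δ) :
    IntegrableOn (fun t => ε t * (δ * t ^ (-(1+δ)))) (Ioi (2:ℝ)) := by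
  have h1 : IntegrableOn (fun t => ((∑ n ∈ Finset.Icc 1 ⌊t⌋₊, a n / n) * (δ * t ^ (-(1+δ)))
      - Real.log (Real.log t) * (δ * t ^ (-(1+δ)))) - B * (δ * t ^ (-(1+δ)))) (Ioi (2:ℝ)) :=
    (L_Idiff a ha B ε K hK hpartial hδ).sub ((wIntegrable hδ two_pos).const_mul B)
  refine h1.congr_fun (fun t ht => ?_) measurableSet_Ioi
  have ht2 : (2:ℝ) ≤ t := le_of_lt ht
  beta_reduce
  rw [hpartial t ht2]
  ring

lemma L_I2 (a : ℕ → ℝ) (ha : ∀ n, 0 ≤ a n) (B : ℝ) (ε : ℝ → ℝ) (K : ℝ)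
    (hK : ∀ t : ℝ, 2 ≤ t → |ε t| ≤ K)
    (hpartial : ∀ x : ℝ, 2 ≤ x →
      (∑ n ∈ Finset.Icc 1 ⌊x⌋₊, a n / n) = Real.log (Real.log x) + B + ε x)
    {δ : ℝ} (hδ : 0 < δ) :
    IntegrableOn
      (fun t => (∑ n ∈ Finset.Icc 1 ⌊t⌋₊, a n / n) * (δ * t ^ (-(1+δ)))) (Ioi (2:ℝ)) := by
  have h1 : IntegrableOn (fun t => Real.log (Real.log t) * (δ * t ^ (-(1+δ)))
      + ((∑ n ∈ Finset.Icc 1 ⌊t⌋₊, a n / n) * (δ * t ^ (-(1+δ)))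
        - Real.log (Real.log t) * (δ * t ^ (-(1+δ))))) (Ioi (2:ℝ)) :=
    (stepC_integrable hδ).add (L_Idiff a ha B ε K hK hpartial hδ)
  exact h1.congr_fun (fun t _ => by ring) measurableSet_Ioi

lemma key (a : ℕ → ℝ) (ha : ∀ n, 0 ≤ a n)
    (B : ℝ) (ε : ℝ → ℝ) (K : ℝ) (hK : ∀ t : ℝ, 2 ≤ t → |ε t| ≤ K)
    (hpartial : ∀ x : ℝ, 2 ≤ x →
      (∑ n ∈ Finset.Icc 1 ⌊x⌋₊, a n / n) = Real.log (Real.log x) + B + ε x)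
    {δ : ℝ} (hδ : 0 < δ)
    (hsum : Summable (fun n : ℕ => a n * (n : ℝ) ^ (-(1 + δ)))) :
    (∑' n : ℕ, a n * (n : ℝ) ^ (-(1 + δ))) + Real.log δ
      = (∫ t in Ioc (1:ℝ) 2, (∑ n ∈ Finset.Icc 1 ⌊t⌋₊, a n / n) * (δ * t ^ (-(1+δ))))
        + B * (2:ℝ) ^ (-δ)
        + (∫ t in Ioi (2:ℝ), ε t * (δ * t ^ (-(1+δ))))
        + (∫ u in Ioi (δ * Real.log 2), Real.log u * Real.exp (-u))
        + Real.log δ * (1 - Real.exp (-(δ * Real.log 2))) := by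
  have hI1 := L_I1 a ha hδ
  have hI2 := L_I2 a ha B ε K hK hpartial hδ
  have hIeps := L_Ieps a ha B ε K hK hpartial hδ
  have hIll := stepC_integrable hδ
  have hIB : IntegrableOn (fun t : ℝ => B * (δ * t ^ (-(1+δ)))) (Ioi (2:ℝ)) :=
    (wIntegrable hδ two_pos).const_mul B
  have hsplit : (∫ t in Ioi (1:ℝ), (∑ n ∈ Finset.Icc 1 ⌊t⌋₊, a n / n) * (δ * t ^ (-(1+δ))))
      = (∫ t in Ioc (1:ℝ) 2, (∑ n ∈ Finset.Icc 1 ⌊t⌋₊, a n / n) * (δ * t ^ (-(1+δ))))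
        + (∫ t in Ioi (2:ℝ), (∑ n ∈ Finset.Icc 1 ⌊t⌋₊, a n / n) * (δ * t ^ (-(1+δ)))) := by
    rw [← setIntegral_union (Ioc_disjoint_Ioi le_rfl) measurableSet_Ioi hI1 hI2,
      Ioc_union_Ioi_eq_Ioi one_le_two]
  have hdecomp : (∫ t in Ioi (2:ℝ), (∑ n ∈ Finset.Icc 1 ⌊t⌋₊, a n / n) * (δ * t ^ (-(1+δ))))
      = (∫ t in Ioi (2:ℝ), Real.log (Real.log t) * (δ * t ^ (-(1+δ)))) + B * (2:ℝ) ^ (-δ)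
        + (∫ t in Ioi (2:ℝ), ε t * (δ * t ^ (-(1+δ)))) := by
    have e1 : EqOn (fun t => (∑ n ∈ Finset.Icc 1 ⌊t⌋₊, a n / n) * (δ * t ^ (-(1+δ))))
        (fun t => Real.log (Real.log t) * (δ * t ^ (-(1+δ)))
          + (B * (δ * t ^ (-(1+δ))) + ε t * (δ * t ^ (-(1+δ))))) (Ioi 2) := by
      intro t ht
      have := hpartial t (le_of_lt ht)
      simp only
      rw [this]
      ring
    have hIBe : IntegrableOn (fun t : ℝ => B * (δ * t ^ (-(1+δ))) + ε t * (δ * t ^ (-(1+δ))))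
        (Ioi (2:ℝ)) := hIB.add hIeps
    rw [setIntegral_congr_fun measurableSet_Ioi e1,
      integral_add hIll hIBe, integral_add hIB hIeps,
      MeasureTheory.integral_const_mul, wint hδ two_pos]
    ring
  rw [stepA a ha hδ hsum, hsplit, hdecomp, stepC hδ]
  ring

end Stmt14Aux
namespace Stmt14Aux

open Filter MeasureTheory Set

lemma tendsto_h1 (a : ℕ → ℝ) (ha : ∀ n, 0 ≤ a n) :
    Tendsto (fun δ : ℝ => ∫ t in Ioc (1:ℝ) 2,
        (∑ n ∈ Finset.Icc 1 ⌊t⌋₊, a n / n) * (δ * t ^ (-(1+δ))))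
      (nhdsWithin 0 (Ioi 0)) (nhds 0) := by
  have hg : Tendsto (fun δ : ℝ => (∑ n ∈ Finset.Icc 1 ⌊(2:ℝ)⌋₊, a n / n) * δ)
      (nhdsWithin 0 (Ioi 0)) (nhds 0) := by
    have hcont : Continuous (fun δ : ℝ => (∑ n ∈ Finset.Icc 1 ⌊(2:ℝ)⌋₊, a n / n) * δ) :=
      continuous_const.mul continuous_id
    have := (hcont.tendsto 0).mono_left (nhdsWithin_le_nhds (s := Ioi (0:ℝ)))
    simpa using this
  refine squeeze_zero_norm' ?_ hg
  filter_upwards [self_mem_nhdsWithin] with δ hδ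
  have hδ0 : (0:ℝ) < δ := hδ
  have hb := MeasureTheory.norm_setIntegral_le_of_norm_le_const (μ := volume)
    (s := Ioc (1:ℝ) 2)
    (f := fun t => (∑ n ∈ Finset.Icc 1 ⌊t⌋₊, a n / n) * (δ * t ^ (-(1+δ))))
    (C := (∑ n ∈ Finset.Icc 1 ⌊(2:ℝ)⌋₊, a n / n) * δ)
    (by rw [Real.volume_Ioc]; exact ENNReal.ofReal_lt_top) ?_
  · calc ‖∫ t in Ioc (1:ℝ) 2, (∑ n ∈ Finset.Icc 1 ⌊t⌋₊, a n / n) * (δ * t ^ (-(1+δ)))‖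
        ≤ ((∑ n ∈ Finset.Icc 1 ⌊(2:ℝ)⌋₊, a n / n) * δ) * (volume (Ioc (1:ℝ) 2)).toReal := hb
      _ = (∑ n ∈ Finset.Icc 1 ⌊(2:ℝ)⌋₊, a n / n) * δ := by
          rw [Real.volume_Ioc]
          norm_num
  · intro t ht
    have ht0 : (0:ℝ) < t := lt_trans one_pos ht.1
    have hw0 : 0 ≤ δ * t ^ (-(1+δ)) := mul_nonneg hδ0.le (Real.rpow_nonneg ht0.le _)
    rw [Real.norm_eq_abs, abs_of_nonneg (mul_nonneg (L_Fnn a ha t) hw0)]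
    have hF : (∑ n ∈ Finset.Icc 1 ⌊t⌋₊, a n / n) ≤ ∑ n ∈ Finset.Icc 1 ⌊(2:ℝ)⌋₊, a n / n :=
      L_Fmono a ha ht.2
    have hwle : δ * t ^ (-(1+δ)) ≤ δ :=
      le_trans (mul_le_mul_of_nonneg_left
        (Real.rpow_le_one_of_one_le_of_nonpos ht.1.le (by linarith)) hδ0.le) (by linarith)
    exact mul_le_mul hF hwle hw0 (L_Fnn a ha 2)

lemma tendsto_h2 (B : ℝ) :
    Tendsto (fun δ : ℝ => B * (2:ℝ) ^ (-δ)) (nhdsWithin 0 (Ioi 0)) (nhds (B * 1)) := by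
  have hcont : Tendsto (fun δ : ℝ => (2:ℝ) ^ (-δ)) (nhds 0) (nhds 1) := by
    have h : Continuous (fun δ : ℝ => Real.exp (Real.log 2 * -δ)) :=
      Real.continuous_exp.comp (continuous_const.mul continuous_neg)
    have h2 := h.tendsto 0
    simp only [neg_zero, mul_zero, Real.exp_zero] at h2
    exact h2.congr (fun δ => (Real.rpow_def_of_pos two_pos (-δ)).symm)
  exact ((hcont.mono_left (nhdsWithin_le_nhds (s := Ioi (0:ℝ))))).const_mul B

lemma tendsto_h3 (a : ℕ → ℝ) (ha : ∀ n, 0 ≤ a n) (B : ℝ) (ε : ℝ → ℝ)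
    (hε : Tendsto ε atTop (nhds 0)) (K : ℝ) (hK0 : 0 < K)
    (hK : ∀ t : ℝ, 2 ≤ t → |ε t| ≤ K)
    (hpartial : ∀ x : ℝ, 2 ≤ x →
      (∑ n ∈ Finset.Icc 1 ⌊x⌋₊, a n / n) = Real.log (Real.log x) + B + ε x) :
    Tendsto (fun δ : ℝ => ∫ t in Ioi (2:ℝ), ε t * (δ * t ^ (-(1+δ))))
      (nhdsWithin 0 (Ioi 0)) (nhds 0) := by
  rw [NormedAddCommGroup.tendsto_nhds_zero]
  intro η hη
  obtain ⟨N, hN⟩ := Metric.tendsto_atTop.mp hε (η/2) (by positivity)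
  set M : ℝ := max N 2 with hMdef
  have hM2 : (2:ℝ) ≤ M := le_max_right _ _
  have hMN : N ≤ M := le_max_left _ _
  have hM0 : (0:ℝ) < M := by linarith
  have hKM : 0 ≤ K * (M-2) := mul_nonneg hK0.le (by linarith)
  set δ₀ : ℝ := (η/2) / (K * (M-2) + 1) with hδ₀def
  have hδ₀pos : 0 < δ₀ := div_pos (by positivity) (by linarith)
  have hδ₀eq : δ₀ * (K * (M-2) + 1) = η/2 := div_mul_cancel₀ _ (by linarith)
  filter_upwards [Ioo_mem_nhdsGT_of_mem (show (0:ℝ) ∈ Ico 0 δ₀ from ⟨le_rfl, hδ₀pos⟩)]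
    with δ hδmem
  obtain ⟨hδ0, hδlt⟩ := hδmem
  have hIe : IntegrableOn (fun t => ε t * (δ * t ^ (-(1+δ)))) (Ioi (2:ℝ)) :=
    L_Ieps a ha B ε K hK hpartial hδ0
  have hsplitI : (∫ t in Ioi (2:ℝ), ε t * (δ * t ^ (-(1+δ))))
      = (∫ t in Ioc (2:ℝ) M, ε t * (δ * t ^ (-(1+δ))))
        + (∫ t in Ioi M, ε t * (δ * t ^ (-(1+δ)))) := by
    rw [← setIntegral_union (Ioc_disjoint_Ioi le_rfl) measurableSet_Ioi
      (hIe.mono_set Ioc_subset_Ioi_self) (hIe.mono_set (Ioi_subset_Ioi hM2)),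
      Ioc_union_Ioi_eq_Ioi hM2]
  rw [hsplitI]
  have hb1 : ‖∫ t in Ioc (2:ℝ) M, ε t * (δ * t ^ (-(1+δ)))‖ ≤ (K * δ) * (M - 2) := by
    have hb := MeasureTheory.norm_setIntegral_le_of_norm_le_const (μ := volume)
      (s := Ioc (2:ℝ) M) (f := fun t => ε t * (δ * t ^ (-(1+δ)))) (C := K * δ)
      (by rw [Real.volume_Ioc]; exact ENNReal.ofReal_lt_top) ?_
    · calc ‖∫ t in Ioc (2:ℝ) M, ε t * (δ * t ^ (-(1+δ)))‖
          ≤ (K * δ) * (volume (Ioc (2:ℝ) M)).toReal := hb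
        _ = (K * δ) * (M - 2) := by
            rw [Real.volume_Ioc, ENNReal.toReal_ofReal (by linarith)]
    · intro x hx
      have hx2 : (2:ℝ) ≤ x := hx.1.le
      have hw0 : 0 ≤ δ * x ^ (-(1+δ)) := mul_nonneg hδ0.le (Real.rpow_nonneg (by linarith) _)
      have hwle : δ * x ^ (-(1+δ)) ≤ δ * 1 := mul_le_mul_of_nonneg_left
        (Real.rpow_le_one_of_one_le_of_nonpos (by linarith) (by linarith)) hδ0.le
      rw [Real.norm_eq_abs, abs_mul]
      calc |ε x| * |δ * x ^ (-(1+δ))| ≤ K * (δ * 1) := by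
            refine mul_le_mul (hK x hx2) ?_ (abs_nonneg _) hK0.le
            rw [abs_of_nonneg hw0]; exact hwle
        _ = K * δ := by ring
  have hb2 : ‖∫ t in Ioi M, ε t * (δ * t ^ (-(1+δ)))‖ ≤ η/2 := by
    calc ‖∫ t in Ioi M, ε t * (δ * t ^ (-(1+δ)))‖
        ≤ ∫ t in Ioi M, ‖ε t * (δ * t ^ (-(1+δ)))‖ := norm_integral_le_integral_norm _
      _ ≤ ∫ t in Ioi M, (η/2) * (δ * t ^ (-(1+δ))) := by
          refine setIntegral_mono_on ((hIe.mono_set (Ioi_subset_Ioi hM2)).norm)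
            ((wIntegrable hδ0 hM0).const_mul (η/2)) measurableSet_Ioi ?_
          intro x hx
          have hxM : M < x := hx
          have hw0 : 0 ≤ δ * x ^ (-(1+δ)) := mul_nonneg hδ0.le (Real.rpow_nonneg (by linarith) _)
          have hεx : |ε x| ≤ η/2 := by
            have h5 := hN x (by linarith)
            rw [Real.dist_eq, sub_zero] at h5
            exact h5.le
          rw [norm_mul, Real.norm_eq_abs, Real.norm_eq_abs, abs_of_nonneg hw0]
          exact mul_le_mul_of_nonneg_right hεx hw0
      _ = (η/2) * M ^ (-δ) := by rw [MeasureTheory.integral_const_mul, wint hδ0 hM0]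
      _ ≤ (η/2) * 1 := mul_le_mul_of_nonneg_left
          (Real.rpow_le_one_of_one_le_of_nonpos (by linarith) (by linarith)) (by positivity)
      _ = η/2 := mul_one _
  have hmul := mul_lt_mul_of_pos_right hδlt (show (0:ℝ) < K * (M-2) + 1 by linarith)
  calc ‖(∫ t in Ioc (2:ℝ) M, ε t * (δ * t ^ (-(1+δ))))
        + (∫ t in Ioi M, ε t * (δ * t ^ (-(1+δ))))‖
      ≤ ‖∫ t in Ioc (2:ℝ) M, ε t * (δ * t ^ (-(1+δ)))‖
        + ‖∫ t in Ioi M, ε t * (δ * t ^ (-(1+δ)))‖ := norm_add_le _ _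
    _ ≤ (K * δ) * (M - 2) + η/2 := add_le_add hb1 hb2
    _ < η := by nlinarith [hδ₀eq, hδ0, hKM]

lemma tendsto_h4 :
    Tendsto (fun δ : ℝ => ∫ u in Ioi (δ * Real.log 2), Real.log u * Real.exp (-u))
      (nhdsWithin 0 (Ioi 0)) (nhds (-Real.eulerMascheroniConstant)) := by
  have hmap : Tendsto (fun δ : ℝ => δ * Real.log 2) (nhdsWithin 0 (Ioi 0))
      (nhdsWithin 0 (Ioi 0)) := by
    rw [tendsto_nhdsWithin_iff]
    constructor
    · have hcont : Continuous (fun δ : ℝ => δ * Real.log 2) :=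
        continuous_id.mul continuous_const
      have := (hcont.tendsto 0).mono_left (nhdsWithin_le_nhds (s := Ioi (0:ℝ)))
      simpa using this
    · filter_upwards [self_mem_nhdsWithin] with δ hδ
      exact mul_pos hδ (Real.log_pos one_lt_two)
  exact tendsto_tail.comp hmap

lemma tendsto_h5 :
    Tendsto (fun δ : ℝ => Real.log δ * (1 - Real.exp (-(δ * Real.log 2))))
      (nhdsWithin 0 (Ioi 0)) (nhds 0) := by
  have hg : Tendsto (fun δ : ℝ => (2 * Real.log 2) * δ ^ ((2⁻¹):ℝ))
      (nhdsWithin 0 (Ioi 0)) (nhds 0) := by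
    have h0 : Tendsto (fun c : ℝ => c ^ ((2⁻¹) : ℝ)) (nhds 0) (nhds 0) := by
      have := (Real.continuousAt_rpow_const 0 (2⁻¹) (Or.inr (by norm_num))).tendsto
      simpa [Real.zero_rpow] using this
    have := (h0.const_mul (2 * Real.log 2)).mono_left (nhdsWithin_le_nhds (s := Ioi (0:ℝ)))
    simpa using this
  refine squeeze_zero_norm' ?_ hg
  filter_upwards [Ioo_mem_nhdsGT_of_mem (show (0:ℝ) ∈ Ico (0:ℝ) 1 by norm_num)] with δ hδ
  obtain ⟨hδ0, hδ1⟩ := hδ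
  have hc0 : 0 ≤ δ * Real.log 2 := le_of_lt (mul_pos hδ0 (Real.log_pos one_lt_two))
  have h1 : |Real.log δ| ≤ 2 * δ ^ (-(2⁻¹) : ℝ) := by
    rw [abs_of_nonpos (Real.log_nonpos hδ0.le hδ1.le)]
    exact neg_log_le δ hδ0
  have h2 : |1 - Real.exp (-(δ * Real.log 2))| ≤ δ * Real.log 2 := by
    have he1 : Real.exp (-(δ * Real.log 2)) ≤ 1 := Real.exp_le_one_iff.mpr (by linarith)
    have he2 : 1 - (δ * Real.log 2) ≤ Real.exp (-(δ * Real.log 2)) := by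
      have := Real.add_one_le_exp (-(δ * Real.log 2))
      linarith
    rw [abs_of_nonneg (by linarith)]
    linarith
  have hpow : δ ^ (-(2⁻¹):ℝ) * δ = δ ^ ((2⁻¹):ℝ) := by
    calc δ ^ (-(2⁻¹):ℝ) * δ = δ ^ (-(2⁻¹):ℝ) * δ ^ (1:ℝ) := by rw [Real.rpow_one]
      _ = δ ^ ((-(2⁻¹)+1:ℝ)) := (Real.rpow_add hδ0 _ _).symm
      _ = δ ^ ((2⁻¹):ℝ) := by norm_num
  calc ‖Real.log δ * (1 - Real.exp (-(δ * Real.log 2)))‖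
      = |Real.log δ| * |1 - Real.exp (-(δ * Real.log 2))| := by
        rw [Real.norm_eq_abs, abs_mul]
    _ ≤ (2 * δ ^ (-(2⁻¹) : ℝ)) * (δ * Real.log 2) := by
        refine mul_le_mul h1 h2 (abs_nonneg _) ?_
        positivity
    _ = (2 * Real.log 2) * (δ ^ (-(2⁻¹):ℝ) * δ) := by ring
    _ = (2 * Real.log 2) * δ ^ ((2⁻¹):ℝ) := by rw [hpow]

end Stmt14Aux

open Filter in
theorem stmt_14 (a : ℕ → ℝ) (C : ℝ) (hC : 0 < C) (ha : ∀ n, 0 ≤ a n)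
    (haC : ∀ n, a n ≤ C * n)
    (hsum : ∀ δ : ℝ, 0 < δ → Summable (fun n : ℕ => a n * (n : ℝ) ^ (-(1 + δ))))
    (B : ℝ) (ε : ℝ → ℝ) (hε : Tendsto ε atTop (nhds 0))
    (hpartial : ∀ x : ℝ, 2 ≤ x →
      (∑ n ∈ Finset.Icc 1 ⌊x⌋₊, a n / n) = Real.log (Real.log x) + B + ε x) :
    Tendsto (fun δ : ℝ => (∑' n : ℕ, a n * (n : ℝ) ^ (-(1 + δ))) + Real.log δ)
      (nhdsWithin 0 (Set.Ioi 0)) (nhds (B - Real.eulerMascheroniConstant)) := by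
  obtain ⟨K, hK0, hK⟩ := Stmt14Aux.L_epsK a ha B ε hε hpartial
  have h1 := Stmt14Aux.tendsto_h1 a ha
  have h2 := Stmt14Aux.tendsto_h2 B
  have h3 := Stmt14Aux.tendsto_h3 a ha B ε hε K hK0 hK hpartial
  have h4 := Stmt14Aux.tendsto_h4
  have h5 := Stmt14Aux.tendsto_h5
  have hsum5 := (((h1.add h2).add h3).add h4).add h5
  have hval : 0 + B * 1 + 0 + -Real.eulerMascheroniConstant + 0
      = B - Real.eulerMascheroniConstant := by ring
  rw [hval] at hsum5
  refine hsum5.congr' ?_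
  filter_upwards [self_mem_nhdsWithin] with δ hδ
  exact (Stmt14Aux.key a ha B ε K hK hpartial hδ (hsum δ hδ)).symm
end

section
/- Let ρ ∈ (0,1), c₄ > 0 and x ≥ 2, and suppose Δ₁(t) = Li(t^ρ) ≤ c₄·t^ρ/(ρ log t) for all t ≥ x. Then |Δ₁(x)/x − ∫_x^∞ Δ₁(t)·t^{−2} dt| ≤ (c₄/(ρ·log x))·(1 + 1/(1−ρ)). -/
open MeasureTheory Set

private lemma log_int_intable {a b : ℝ} (ha : 1 < a) (hb : 1 < b) :
    IntervalIntegrable (fun s => 1 / Real.log s) volume a b := by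
  apply ContinuousOn.intervalIntegrable
  intro s hs
  have hs1 : 1 < s := lt_of_lt_of_le (lt_min ha hb) hs.1
  have : ContinuousAt (fun s => 1 / Real.log s) s := by
    exact continuousAt_const.div (Real.continuousAt_log (by linarith))
      (ne_of_gt (Real.log_pos hs1))
  exact this.continuousWithinAt

private lemma li_nonneg {a b : ℝ} (ha : 1 < a) (hab : a ≤ b) :
    0 ≤ ∫ s in a..b, 1 / Real.log s := by
  apply intervalIntegral.integral_nonneg hab
  intro s hs
  have : 0 < Real.log s := Real.log_pos (lt_of_lt_of_le ha hs.1)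
  positivity

private lemma li_upper {a b : ℝ} (ha : 1 < a) (hab : a ≤ b) :
    (∫ s in a..b, 1 / Real.log s) ≤ (b - a) * (1 / Real.log a) := by
  have h := intervalIntegral.integral_mono_on (μ := volume) (f := fun s => 1 / Real.log s)
    (g := fun _ => 1 / Real.log a) hab (log_int_intable ha (lt_of_lt_of_le ha hab))
    intervalIntegrable_const ?_
  · simpa using h
  · intro s hs
    have h1 : 0 < Real.log a := Real.log_pos ha
    have h2 : Real.log a ≤ Real.log s := Real.log_le_log (by linarith) hs.1
    exact one_div_le_one_div_of_le h1 h2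

private lemma li_lower {a b : ℝ} (ha : 1 < a) (hab : a ≤ b) :
    (b - a) * (1 / Real.log b) ≤ ∫ s in a..b, 1 / Real.log s := by
  have h := intervalIntegral.integral_mono_on (μ := volume) (f := fun _ => 1 / Real.log b)
    (g := fun s => 1 / Real.log s) hab intervalIntegrable_const
    (log_int_intable ha (lt_of_lt_of_le ha hab)) ?_
  · simpa using h
  · intro s hs
    have h1 : 0 < Real.log s := Real.log_pos (lt_of_lt_of_le ha hs.1)
    have h2 : Real.log s ≤ Real.log b := Real.log_le_log (by nlinarith [hs.1, hs.2]) hs.2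

    exact one_div_le_one_div_of_le h1 h2
private lemma li_split {a b : ℝ} (ha : 1 < a) (hb : 1 < b) :
    (∫ s in (2:ℝ)..b, 1 / Real.log s) - (∫ s in (2:ℝ)..a, 1 / Real.log s)
      = ∫ s in a..b, 1 / Real.log s := by
  rw [← intervalIntegral.integral_add_adjacent_intervals
    (log_int_intable one_lt_two ha) (log_int_intable ha hb)]
  ring

set_option maxHeartbeats 1000000 in
open MeasureTheory in
theorem stmt_16 (ρ c₄ x : ℝ) (hρ0 : 0 < ρ) (hρ1 : ρ < 1) (hc : 0 < c₄) (hx : 2 ≤ x)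
    (Δ₁ : ℝ → ℝ) (hΔ : ∀ t, Δ₁ t = ∫ s in (2 : ℝ)..(t ^ ρ), 1 / Real.log s)
    (hbound : ∀ t, x ≤ t → Δ₁ t ≤ c₄ * t ^ ρ / (ρ * Real.log t)) :
    |Δ₁ x / x - ∫ t in Set.Ioi x, Δ₁ t * t ^ (-(2 : ℝ))| ≤
      c₄ / (ρ * Real.log x) * (1 + 1 / (1 - ρ)) := by
  have hx0 : (0:ℝ) < x := by linarith
  have hL : 0 < Real.log x := Real.log_pos (by linarith)
  set L := Real.log x with hLdef
  have hρL : 0 < ρ * L := by positivity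
  have ha1 : 1 < x ^ ρ := by
    have h := Real.rpow_lt_rpow_of_exponent_lt (show (1:ℝ) < x by linarith) hρ0
    rwa [Real.rpow_zero] at h
  have hxρle : ∀ t, x ≤ t → x ^ ρ ≤ t ^ ρ := fun t ht =>
    Real.rpow_le_rpow hx0.le ht hρ0.le
  have hb1 : ∀ t, x ≤ t → 1 < t ^ ρ := fun t ht => lt_of_lt_of_le ha1 (hxρle t ht)
  have hlogxρ : Real.log (x ^ ρ) = ρ * L := Real.log_rpow hx0 ρ
  have hinc : ∀ t, x ≤ t → Δ₁ t - Δ₁ x = ∫ s in (x ^ ρ)..(t ^ ρ), 1 / Real.log s := by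
    intro t ht
    rw [hΔ t, hΔ x]
    exact li_split ha1 (hb1 t ht)
  have hinc0 : ∀ t, x ≤ t → 0 ≤ Δ₁ t - Δ₁ x := by
    intro t ht; rw [hinc t ht]; exact li_nonneg ha1 (hxρle t ht)
  have hincU : ∀ t, x ≤ t → Δ₁ t - Δ₁ x ≤ t ^ ρ * (1 / (ρ * L)) := by
    intro t ht
    rw [hinc t ht]
    calc (∫ s in (x ^ ρ)..(t ^ ρ), 1 / Real.log s)
        ≤ (t ^ ρ - x ^ ρ) * (1 / Real.log (x ^ ρ)) := li_upper ha1 (hxρle t ht)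
      _ ≤ t ^ ρ * (1 / (ρ * L)) := by
          rw [hlogxρ]
          have h0 : (0:ℝ) ≤ x ^ ρ := by linarith
          have h1 : (0:ℝ) ≤ 1 / (ρ * L) := by positivity
          nlinarith
  -- c₄ is at least 1
  have hc1 : (1:ℝ) ≤ c₄ := by
    refine le_of_forall_pos_le_add fun ε hε => ?_
    set u : ℝ := max 2 (max x (1/ε)) with hu
    have hu2 : (2:ℝ) ≤ u := le_max_left _ _
    have hux : x ≤ u := le_trans (le_max_left _ _) (le_max_right _ _)
    have huε : 1/ε ≤ u := le_trans (le_max_right _ _) (le_max_right _ _)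
    have hu0 : (0:ℝ) < u := by linarith
    have hu1 : (1:ℝ) < u := by linarith
    set t : ℝ := u ^ ((2:ℝ)/ρ) with htdef
    have h2ρ : (1:ℝ) ≤ 2/ρ := by rw [le_div_iff₀ hρ0]; linarith
    have hut : u ≤ t := by
      calc u = u ^ (1:ℝ) := (Real.rpow_one u).symm
        _ ≤ u ^ ((2:ℝ)/ρ) := Real.rpow_le_rpow_of_exponent_le hu1.le h2ρ
    have hxt : x ≤ t := le_trans hux hut
    have htρ : t ^ ρ = u * u := by
      rw [htdef, ← Real.rpow_mul hu0.le]
      rw [show (2:ℝ)/ρ * ρ = 2 by field_simp]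
      rw [show (2:ℝ) = ((2:ℕ):ℝ) by norm_num, Real.rpow_natCast]
      ring
    have hlogt : Real.log t = (2/ρ) * Real.log u := Real.log_rpow hu0 _
    have hlogu : 0 < Real.log u := Real.log_pos hu1
    have huu1 : 1 < u * u := by nlinarith
    have hlogu2 : Real.log (u * u) = 2 * Real.log u := by
      rw [Real.log_mul (by positivity) (by positivity)]; ring
    have hlow : (u * u - u) * (1 / (2 * Real.log u)) ≤ Δ₁ t := by
      rw [hΔ t, htρ, ← hlogu2]
      have h1 : (∫ s in u..(u*u), 1 / Real.log s) ≤ ∫ s in (2:ℝ)..(u*u), 1 / Real.log s := by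
        have hsp := li_split hu1 huu1
        have h0 := li_nonneg (a := 2) (b := u) one_lt_two hu2
        linarith
      exact le_trans (li_lower hu1 (by nlinarith)) h1
    have hup := hbound t hxt
    rw [htρ, hlogt] at hup
    have hρlog : ρ * (2/ρ * Real.log u) = 2 * Real.log u := by field_simp
    rw [hρlog] at hup
    have h2l : 0 < 2 * Real.log u := by positivity
    have key2 : u * u - u ≤ c₄ * (u * u) := by
      have hkey : (u * u - u) * (1 / (2 * Real.log u)) ≤ c₄ * (u * u) / (2 * Real.log u) :=
        le_trans hlow hup
      rw [mul_one_div, div_le_div_iff₀ h2l h2l] at hkey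
      nlinarith
    have hεu : 1 ≤ ε * u := by
      rw [div_le_iff₀ hε] at huε; linarith [mul_comm u ε]
    have huu0 : 0 < u * u := by positivity
    have h5 : u ≤ ε * u * u := by nlinarith [mul_le_mul_of_nonneg_right hεu hu0.le]
    have h6 : 1 * (u * u) ≤ (c₄ + ε) * (u * u) := by nlinarith
    have h7 := le_of_mul_le_mul_right h6 huu0
    linarith
  -- integrability
  have hm2 : ρ - 2 < -1 := by linarith
  have hint2 : IntegrableOn (fun t : ℝ => t ^ (-(2:ℝ))) (Set.Ioi x) :=
    integrableOn_Ioi_rpow_of_lt (by norm_num) hx0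
  have hintρ : IntegrableOn (fun t : ℝ => t ^ (ρ - 2 : ℝ)) (Set.Ioi x) :=
    integrableOn_Ioi_rpow_of_lt hm2 hx0
  have hmono : MonotoneOn Δ₁ (Set.Ici x) := by
    intro t ht t' ht' htt'
    have h1 : 1 < t ^ ρ := hb1 t ht
    have h2 : 1 < t' ^ ρ := hb1 t' ht'
    have h3 : t ^ ρ ≤ t' ^ ρ := Real.rpow_le_rpow (by linarith [Set.mem_Ici.mp ht]) htt' hρ0.le
    have h4 := li_split h1 h2
    have h5 := li_nonneg h1 h3
    rw [hΔ t, hΔ t']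
    linarith
  have hDmeas : Measurable (fun t => Δ₁ (max t x)) := by
    apply Monotone.measurable
    intro t t' h
    exact hmono (Set.mem_Ici.mpr (le_max_right _ _)) (Set.mem_Ici.mpr (le_max_right _ _))
      (max_le_max h le_rfl)
  have haesm : AEStronglyMeasurable Δ₁ (volume.restrict (Set.Ioi x)) := by
    refine hDmeas.aestronglyMeasurable.congr ?_
    filter_upwards [ae_restrict_mem measurableSet_Ioi] with t ht
    rw [max_eq_left (le_of_lt ht)]
  have haesm2 : AEStronglyMeasurable (fun t => Δ₁ t * t ^ (-(2:ℝ)))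
      (volume.restrict (Set.Ioi x)) := haesm.mul hint2.aestronglyMeasurable
  have habs : ∀ t ∈ Set.Ioi x, ‖Δ₁ t * t ^ (-(2:ℝ))‖
      ≤ |Δ₁ x| * t ^ (-(2:ℝ)) + (1/(ρ*L)) * t ^ (ρ - 2) := by
    intro t ht
    have ht' : x ≤ t := le_of_lt ht
    have ht0 : 0 < t := lt_trans hx0 ht
    have h2 : (0:ℝ) ≤ t ^ (-(2:ℝ)) := Real.rpow_nonneg ht0.le _
    have h3 : |Δ₁ t| ≤ |Δ₁ x| + t ^ ρ * (1/(ρ*L)) := by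
      have i0 := hinc0 t ht'
      have iU := hincU t ht'
      rw [abs_le]; constructor
      · have hna : -|Δ₁ x| ≤ Δ₁ x := neg_abs_le _
        nlinarith [Real.rpow_nonneg ht0.le ρ, (by positivity : (0:ℝ) ≤ 1/(ρ*L))]
      · have hla : Δ₁ x ≤ |Δ₁ x| := le_abs_self _
        linarith
    rw [norm_mul, Real.norm_eq_abs, Real.norm_eq_abs, abs_of_nonneg h2]
    calc |Δ₁ t| * t ^ (-(2:ℝ)) ≤ (|Δ₁ x| + t ^ ρ * (1/(ρ*L))) * t ^ (-(2:ℝ)) :=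
          mul_le_mul_of_nonneg_right h3 h2
      _ = |Δ₁ x| * t ^ (-(2:ℝ)) + (1/(ρ*L)) * t ^ (ρ - 2) := by
          rw [show (ρ - 2 : ℝ) = ρ + (-2) by ring, Real.rpow_add ht0]
          ring
  have hintf : IntegrableOn (fun t => Δ₁ t * t ^ (-(2:ℝ))) (Set.Ioi x) := by
    apply Integrable.mono ((hint2.const_mul |Δ₁ x|).add (hintρ.const_mul (1/(ρ*L)))) haesm2
    filter_upwards [ae_restrict_mem measurableSet_Ioi] with t ht
    refine le_trans (habs t ht) ?_
    rw [Real.norm_eq_abs]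
    exact le_abs_self _
  -- value of the comparison integrals
  have hI2 : (∫ t in Set.Ioi x, t ^ (-(2:ℝ))) = x ^ (-(1:ℝ)) := by
    rw [integral_Ioi_rpow_of_lt (by norm_num) hx0]; norm_num
  have hne : (1:ℝ) - ρ ≠ 0 := by linarith
  have hIρ : (∫ t in Set.Ioi x, t ^ (ρ - 2 : ℝ)) = x ^ (ρ - 1) / (1 - ρ) := by
    rw [integral_Ioi_rpow_of_lt hm2 hx0, show (ρ - 2 + 1 : ℝ) = ρ - 1 from by ring,
      div_eq_div_iff (by linarith) hne]
    ring
  have hA : Δ₁ x / x = ∫ t in Set.Ioi x, Δ₁ x * t ^ (-(2:ℝ)) := by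
    rw [MeasureTheory.integral_const_mul, hI2, Real.rpow_neg_one, div_eq_mul_inv]
  have hdiff : (∫ t in Set.Ioi x, Δ₁ t * t ^ (-(2:ℝ))) - Δ₁ x / x
      = ∫ t in Set.Ioi x, (Δ₁ t - Δ₁ x) * t ^ (-(2:ℝ)) := by
    have hfe : (fun t => (Δ₁ t - Δ₁ x) * t ^ (-(2:ℝ)))
        = fun t => Δ₁ t * t ^ (-(2:ℝ)) - Δ₁ x * t ^ (-(2:ℝ)) := funext fun t => by ring
    rw [hfe, integral_sub hintf (hint2.const_mul (Δ₁ x)), hA]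
  have hintsub : IntegrableOn (fun t => (Δ₁ t - Δ₁ x) * t ^ (-(2:ℝ))) (Set.Ioi x) := by
    apply (hintf.sub (hint2.const_mul (Δ₁ x))).congr
    filter_upwards with t
    show Δ₁ t * t ^ (-(2:ℝ)) - Δ₁ x * t ^ (-(2:ℝ)) = _
    ring
  have hd0 : 0 ≤ ∫ t in Set.Ioi x, (Δ₁ t - Δ₁ x) * t ^ (-(2:ℝ)) := by
    apply setIntegral_nonneg measurableSet_Ioi
    intro t ht
    exact mul_nonneg (hinc0 t (le_of_lt ht))
      (Real.rpow_nonneg (le_of_lt (lt_trans hx0 ht)) _)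
  have hdU : (∫ t in Set.Ioi x, (Δ₁ t - Δ₁ x) * t ^ (-(2:ℝ)))
      ≤ (1/(ρ*L)) * (x ^ (ρ - 1) / (1 - ρ)) := by
    have step : (∫ t in Set.Ioi x, (Δ₁ t - Δ₁ x) * t ^ (-(2:ℝ)))
        ≤ ∫ t in Set.Ioi x, (1/(ρ*L)) * t ^ (ρ - 2) := by
      apply setIntegral_mono_on hintsub (hintρ.const_mul _) measurableSet_Ioi
      intro t ht
      have ht0 : 0 < t := lt_trans hx0 ht
      have h2 : (0:ℝ) ≤ t ^ (-(2:ℝ)) := Real.rpow_nonneg ht0.le _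
      calc (Δ₁ t - Δ₁ x) * t ^ (-(2:ℝ)) ≤ (t ^ ρ * (1/(ρ*L))) * t ^ (-(2:ℝ)) :=
            mul_le_mul_of_nonneg_right (hincU t (le_of_lt ht)) h2
        _ = (1/(ρ*L)) * t ^ (ρ - 2) := by
            rw [show (ρ - 2 : ℝ) = ρ + (-2) by ring, Real.rpow_add ht0]
            ring
    rwa [MeasureTheory.integral_const_mul, hIρ] at step
  -- finish
  have h1ρ : (0:ℝ) < 1 - ρ := by linarith
  have h0 : 0 ≤ (∫ t in Set.Ioi x, Δ₁ t * t ^ (-(2:ℝ))) - Δ₁ x / x := hdiff ▸ hd0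
  rw [abs_sub_comm, abs_of_nonneg h0]
  have hxρ1 : x ^ (ρ - 1 : ℝ) ≤ 1 :=
    Real.rpow_le_one_of_one_le_of_nonpos (by linarith) (by linarith)
  calc (∫ t in Set.Ioi x, Δ₁ t * t ^ (-(2:ℝ))) - Δ₁ x / x
      ≤ (1/(ρ*L)) * (x ^ (ρ - 1) / (1 - ρ)) := hdiff ▸ hdU
    _ ≤ (1/(ρ*L)) * (1 / (1 - ρ)) := by gcongr
    _ ≤ c₄ / (ρ*L) * (1 + 1 / (1 - ρ)) := by
        have p1 : (0:ℝ) ≤ 1/(1-ρ) := by positivity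
        have e1 : (1:ℝ)/(ρ*L) ≤ c₄/(ρ*L) := by gcongr
        have e2 : (1:ℝ)/(1-ρ) ≤ 1 + 1/(1-ρ) := by linarith
        have p2 : (0:ℝ) ≤ 1/(ρ*L) := by positivity
        calc (1/(ρ*L)) * (1/(1-ρ)) ≤ (c₄/(ρ*L)) * (1/(1-ρ)) :=
              mul_le_mul_of_nonneg_right e1 p1
          _ ≤ (c₄/(ρ*L)) * (1 + 1/(1-ρ)) := by
              apply mul_le_mul_of_nonneg_left e2 (by positivity)
end

section
/- Let r ≥ 2 be an integer and let f : ℕ → ℕ satisfy f(b) → ∞ and f(b)/b → 0 as b → ∞. Let Φ_{r^m}(b) ≥ 0 satisfy m·Φ_{r^m}(b) ≤ r^{dm} + 1 + 2b·r^{dm−m/2} and Φ_{r^m}(b)/b → φ_{r^m} for each m. Then ∑_{m=1}^{∞} φ_{r^m}·log(r^{dm}/(r^{dm}−1)) converges and (1/b)·∑_{m=1}^{f(b)} Φ_{r^m}(b)·log(r^{dm}/(r^{dm}−1)) → ∑_{m=1}^{∞} φ_{r^m}·log(r^{dm}/(r^{dm}−1)) as b → ∞. -/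
set_option maxHeartbeats 1000000

open Filter in
theorem stmt_18 (r d : ℕ) (hr : 2 ≤ r) (hd : 1 ≤ d)
    (f : ℕ → ℕ) (hf1 : Tendsto f atTop atTop)
    (hf2 : Tendsto (fun b => (f b : ℝ) / b) atTop (nhds 0))
    (Φ : ℕ → ℕ → ℝ) (hΦ : ∀ b m, 0 ≤ Φ b m)
    (hbound : ∀ b m : ℕ, 1 ≤ m → (m : ℝ) * Φ b m ≤
        (r : ℝ) ^ (d * m) + 1 + 2 * (b : ℝ) * (r : ℝ) ^ ((d * m : ℝ) - (m : ℝ) / 2))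
    (φ : ℕ → ℝ) (hconv : ∀ m, Tendsto (fun b => Φ b m / b) atTop (nhds (φ m))) :
    Summable (fun m : ℕ => φ m * Real.log ((r : ℝ) ^ (d * m) / ((r : ℝ) ^ (d * m) - 1))) ∧
    Tendsto (fun b : ℕ => (1 / (b : ℝ)) * ∑ m ∈ Finset.Icc 1 (f b),
        Φ b m * Real.log ((r : ℝ) ^ (d * m) / ((r : ℝ) ^ (d * m) - 1))) atTop
      (nhds (∑' m : ℕ, φ m * Real.log ((r : ℝ) ^ (d * m) / ((r : ℝ) ^ (d * m) - 1)))) := by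
  set c : ℝ := (r : ℝ) with hc
  have hc2 : (2 : ℝ) ≤ c := by
    have := (Nat.cast_le (α := ℝ)).mpr hr
    simpa [hc] using this
  have hc1 : (1 : ℝ) < c := by linarith
  have hc0 : (0 : ℝ) < c := by linarith
  set L : ℕ → ℝ := fun m => Real.log (c ^ (d * m) / (c ^ (d * m) - 1)) with hLdef
  set ρ : ℝ := c ^ (-(1 : ℝ)/2) with hρdef
  set D : ℕ → ℝ := fun m => 4 * ρ ^ m with hDdef
  have hρ0 : 0 ≤ ρ := Real.rpow_nonneg hc0.le _
  have hρ1 : ρ < 1 := Real.rpow_lt_one_of_one_lt_of_neg hc1 (by norm_num)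
  have hDsum : Summable D := (summable_geometric_of_lt_one hρ0 hρ1).mul_left 4
  have hD0 : ∀ m, 0 ≤ D m := fun m => by positivity
  -- the key rpow identity
  have hkey : ∀ m : ℕ, c ^ ((d : ℝ) * (m : ℝ) - (m : ℝ) / 2) = c ^ (d * m) * ρ ^ m := by
    intro m
    have h1 : (d : ℝ) * (m : ℝ) - (m : ℝ) / 2
        = ((d * m : ℕ) : ℝ) + (-(1 : ℝ)/2) * (m : ℕ) := by push_cast; ring
    rw [h1, Real.rpow_add hc0, Real.rpow_natCast]
    congr 1
    rw [Real.rpow_mul hc0.le, Real.rpow_natCast]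
  have hX2 : ∀ m : ℕ, 1 ≤ m → (2 : ℝ) ≤ c ^ (d * m) := by
    intro m hm
    calc (2:ℝ) ≤ c := hc2
    _ ≤ c ^ (d * m) := le_self_pow₀ (by linarith) (by positivity)
  have hL0 : ∀ m : ℕ, 1 ≤ m → 0 ≤ L m := by
    intro m hm
    apply Real.log_nonneg
    have h2 := hX2 m hm
    rw [le_div_iff₀ (by linarith)]
    linarith
  have hLle : ∀ m : ℕ, 1 ≤ m → L m ≤ 2 / c ^ (d * m) := by
    intro m hm
    have h2 := hX2 m hm
    set x : ℝ := c ^ (d * m)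
    have hx1 : x - 1 ≠ 0 := by linarith
    have hlog : Real.log (x / (x - 1)) ≤ x / (x - 1) - 1 :=
      Real.log_le_sub_one_of_pos (div_pos (by linarith) (by linarith))
    have he : x / (x - 1) - 1 = 1 / (x - 1) := by
      rw [div_sub_one hx1, show x - (x - 1) = 1 from by ring]
    have hle : 1 / (x - 1) ≤ 2 / x := by
      rw [div_le_div_iff₀ (by linarith) (by linarith)]; nlinarith
    calc L m ≤ x / (x - 1) - 1 := hlog
    _ = 1 / (x - 1) := he
    _ ≤ 2 / x := hle
  -- Bound on Φ b m / b
  have hΦdiv : ∀ b m : ℕ, 1 ≤ m →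
      Φ b m / b ≤ (c ^ (d * m) + 1) / b + 2 * (c ^ (d * m) * ρ ^ m) := by
    intro b m hm
    rcases Nat.eq_zero_or_pos b with hb | hb
    · subst hb
      simp only [Nat.cast_zero, div_zero, zero_add]
      positivity
    · have hb0 : (0 : ℝ) < b := by exact_mod_cast hb
      have h1 : Φ b m ≤ c ^ (d * m) + 1 + 2 * (b : ℝ) * (c ^ (d * m) * ρ ^ m) := by
        have h2 := hbound b m hm
        rw [hkey m] at h2
        have h3 : Φ b m ≤ (m : ℝ) * Φ b m := by
          have : (1 : ℝ) ≤ (m : ℝ) := by exact_mod_cast hm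
          nlinarith [hΦ b m]
        linarith
      calc Φ b m / b ≤ (c ^ (d * m) + 1 + 2 * (b : ℝ) * (c ^ (d * m) * ρ ^ m)) / b := by
            gcongr
      _ = (c ^ (d * m) + 1) / b + 2 * (c ^ (d * m) * ρ ^ m) := by field_simp
  have hφ0 : ∀ m, 0 ≤ φ m := by
    intro m
    refine ge_of_tendsto' (hconv m) (fun b => ?_)
    exact div_nonneg (hΦ b m) (Nat.cast_nonneg b)
  have hφle : ∀ m : ℕ, 1 ≤ m → φ m ≤ 2 * (c ^ (d * m) * ρ ^ m) := by
    intro m hm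
    refine le_of_tendsto_of_tendsto (hconv m)
      (f := fun b => Φ b m / b)
      (g := fun b : ℕ => (c ^ (d * m) + 1) / b + 2 * (c ^ (d * m) * ρ ^ m))
      ?_ (Eventually.of_forall fun b => hΦdiv b m hm)
    have := (tendsto_const_div_atTop_nhds_zero_nat (c ^ (d * m) + 1)).add_const
      (2 * (c ^ (d * m) * ρ ^ m))
    simpa using this
  -- g and its bounds
  set g : ℕ → ℝ := fun m => φ m * L m with hgdef
  have hg00 : g 0 = 0 := by
    simp [hgdef, hLdef]
  have hg_nonneg : ∀ m, 0 ≤ g m := by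
    intro m
    rcases Nat.eq_zero_or_pos m with h | h
    · subst h; rw [hg00]
    · exact mul_nonneg (hφ0 m) (hL0 m h)
  have hgleD : ∀ m, g m ≤ D m := by
    intro m
    rcases Nat.eq_zero_or_pos m with h | h
    · subst h; rw [hg00]; simp [hDdef]
    · have h2 := hX2 m h
      have := mul_le_mul (hφle m h) (hLle m h) (hL0 m h) (by positivity)
      calc g m ≤ 2 * (c ^ (d * m) * ρ ^ m) * (2 / c ^ (d * m)) := this
      _ = 4 * ρ ^ m := by field_simp; ring
      _ = D m := rfl
  have hgsum : Summable g := Summable.of_nonneg_of_le hg_nonneg hgleD hDsum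
  refine ⟨hgsum, ?_⟩
  -- main convergence
  have hG_nonneg : ∀ b m : ℕ, 1 ≤ m → 0 ≤ Φ b m / b * L m := fun b m hm =>
    mul_nonneg (div_nonneg (hΦ b m) (Nat.cast_nonneg b)) (hL0 m hm)
  have hGle : ∀ b m : ℕ, 1 ≤ m → 1 ≤ b → Φ b m / b * L m ≤ 4 / b + D m := by
    intro b m hm hb
    have hb0 : (1 : ℝ) ≤ (b : ℝ) := by exact_mod_cast hb
    have hX := hX2 m hm
    set x : ℝ := c ^ (d * m)
    set p : ℝ := ρ ^ m
    have hp0 : 0 ≤ p := pow_nonneg hρ0 m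
    have h1 : Φ b m / b * L m ≤ ((x + 1) / b + 2 * (x * p)) * (2 / x) :=
      mul_le_mul (hΦdiv b m hm) (hLle m hm) (hL0 m hm) (by positivity)
    have h2 : ((x + 1) / b + 2 * (x * p)) * (2 / x) = 2 / b + 2 / (b * x) + 4 * p := by
      field_simp; ring
    have h3 : 2 / ((b : ℝ) * x) ≤ 2 / b := by
      rw [div_le_div_iff₀ (by positivity) (by positivity)]
      nlinarith
    calc Φ b m / b * L m ≤ 2 / b + 2 / ((b : ℝ) * x) + 4 * p := by rw [← h2]; exact h1
    _ ≤ 2 / b + 2 / b + 4 * p := by linarith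
    _ = 4 / b + D m := by
        have hD : D m = 4 * p := rfl
        rw [hD]; ring
  -- rewrite the sum
  have hrw : ∀ b : ℕ, (1 / (b : ℝ)) * ∑ m ∈ Finset.Icc 1 (f b), Φ b m * L m
      = ∑ m ∈ Finset.Ioc 0 (f b), Φ b m / b * L m := by
    intro b
    rw [← Finset.Icc_add_one_left_eq_Ioc, Finset.mul_sum]
    exact Finset.sum_congr rfl fun m _ => by ring
  have hIoc_range : ∀ (h : ℕ → ℝ) (K : ℕ), h 0 = 0 →
      ∑ m ∈ Finset.range (K + 1), h m = ∑ m ∈ Finset.Ioc 0 K, h m := by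
    intro h K h0
    rw [← Nat.Ico_zero_eq_range, Finset.Ico_add_one_right_eq_Icc]
    symm
    apply Finset.sum_subset
    · intro x hx
      simp only [Finset.mem_Ioc] at hx
      simp only [Finset.mem_Icc]
      omega
    · intro x hx hx'
      simp only [Finset.mem_Icc] at hx
      simp only [Finset.mem_Ioc] at hx'
      have : x = 0 := by omega
      rw [this, h0]
  rw [Metric.tendsto_atTop]
  intro ε hε
  -- choose M controlling the tail of D
  have htendD : Tendsto (fun i => ∑' k, D (k + i)) atTop (nhds 0) := tendsto_sum_nat_add D
  obtain ⟨M, hM⟩ := (Metric.tendsto_atTop.mp htendD (ε / 4) (by linarith)).imp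
    (fun M hM => hM)
  have hMtail : ∑' k, D (k + (M + 1)) < ε / 4 := by
    have := hM (M + 1) (by omega)
    rwa [Real.dist_eq, sub_zero, abs_of_nonneg (tsum_nonneg fun k => hD0 _)] at this
  have hDshift : Summable fun k => D (k + (M + 1)) := (summable_nat_add_iff (M + 1)).mpr hDsum
  have hgshift : Summable fun k => g (k + (M + 1)) := (summable_nat_add_iff (M + 1)).mpr hgsum
  -- tail of g
  set T : ℝ := ∑' m, g m with hTdef
  have hgtail : T - ∑ m ∈ Finset.Ioc 0 M, g m ≤ ε / 4 ∧
      0 ≤ T - ∑ m ∈ Finset.Ioc 0 M, g m := by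
    have h1 : ∑ m ∈ Finset.range (M + 1), g m + ∑' k, g (k + (M + 1)) = T :=
      Summable.sum_add_tsum_nat_add (M + 1) hgsum
    rw [hIoc_range g M hg00] at h1
    constructor
    · have h2 : ∑' k, g (k + (M + 1)) ≤ ∑' k, D (k + (M + 1)) :=
        Summable.tsum_le_tsum (fun k => hgleD _) hgshift hDshift
      linarith
    · have h3 : 0 ≤ ∑' k, g (k + (M + 1)) := tsum_nonneg fun k => hg_nonneg _
      linarith
  -- finite tail sums of D
  have hDfin : ∀ K : ℕ, ∑ m ∈ Finset.Ioc M K, D m ≤ ε / 4 := by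
    intro K
    have h1 : Finset.Ioc M K = Finset.Ico (M + 1) (K + 1) := by
      ext x; simp [Finset.mem_Ioc, Finset.mem_Ico]
    rw [h1, Finset.sum_Ico_eq_sum_range]
    have h2 : ∑ i ∈ Finset.range (K + 1 - (M + 1)), D (M + 1 + i)
        = ∑ i ∈ Finset.range (K + 1 - (M + 1)), D (i + (M + 1)) :=
      Finset.sum_congr rfl fun i _ => by rw [add_comm]
    rw [h2]
    calc ∑ i ∈ Finset.range (K + 1 - (M + 1)), D (i + (M + 1))
        ≤ ∑' k, D (k + (M + 1)) := Summable.sum_le_tsum _ (fun i _ => hD0 _) hDshift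
    _ ≤ ε / 4 := hMtail.le
  -- finite-part convergence
  have hfin : Tendsto (fun b => ∑ m ∈ Finset.Ioc 0 M, Φ b m / b * L m) atTop
      (nhds (∑ m ∈ Finset.Ioc 0 M, g m)) :=
    tendsto_finset_sum _ fun m _ => (hconv m).mul_const (L m)
  obtain ⟨N₁, hN₁⟩ := Metric.tendsto_atTop.mp hfin (ε / 4) (by linarith)
  obtain ⟨N₂, hN₂⟩ := Metric.tendsto_atTop.mp hf2 (ε / 16) (by linarith)
  obtain ⟨N₃, hN₃⟩ := eventually_atTop.mp (tendsto_atTop.mp hf1 M)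
  refine ⟨max (max N₁ N₂) (max N₃ 1), fun b hb => ?_⟩
  have hbN₁ : N₁ ≤ b := le_trans (le_max_left _ _) (le_trans (le_max_left _ _) hb)
  have hbN₂ : N₂ ≤ b := le_trans (le_max_right _ _) (le_trans (le_max_left _ _) hb)
  have hbN₃ : N₃ ≤ b := le_trans (le_max_left _ _) (le_trans (le_max_right _ _) hb)
  have hb1 : 1 ≤ b := le_trans (le_max_right _ _) (le_trans (le_max_right _ _) hb)
  have hfbM : M ≤ f b := hN₃ b hbN₃
  have hb0 : (0 : ℝ) < b := by exact_mod_cast hb1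
  -- split the sum
  rw [Real.dist_eq, hrw b]
  have hsplit : ∑ m ∈ Finset.Ioc 0 (f b), Φ b m / b * L m
      = ∑ m ∈ Finset.Ioc 0 M, Φ b m / b * L m + ∑ m ∈ Finset.Ioc M (f b), Φ b m / b * L m :=
    (Finset.sum_Ioc_consecutive _ (Nat.zero_le M) hfbM).symm
  rw [hsplit]
  -- bound the tail part
  have htail_nonneg : 0 ≤ ∑ m ∈ Finset.Ioc M (f b), Φ b m / b * L m :=
    Finset.sum_nonneg fun m hm => hG_nonneg b m (by
      simp only [Finset.mem_Ioc] at hm; omega)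
  have htail_le : ∑ m ∈ Finset.Ioc M (f b), Φ b m / b * L m
      ≤ 4 * ((f b : ℝ) / b) + ε / 4 := by
    calc ∑ m ∈ Finset.Ioc M (f b), Φ b m / b * L m
        ≤ ∑ m ∈ Finset.Ioc M (f b), (4 / (b : ℝ) + D m) := by
          refine Finset.sum_le_sum fun m hm => ?_
          simp only [Finset.mem_Ioc] at hm
          exact hGle b m (by omega) hb1
    _ = (Finset.Ioc M (f b)).card * (4 / (b : ℝ)) + ∑ m ∈ Finset.Ioc M (f b), D m := by
          rw [Finset.sum_add_distrib, Finset.sum_const, nsmul_eq_mul]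
    _ ≤ (f b : ℝ) * (4 / (b : ℝ)) + ε / 4 := by
          have hcard : ((Finset.Ioc M (f b)).card : ℝ) ≤ (f b : ℝ) := by
            rw [Nat.card_Ioc]
            exact_mod_cast Nat.sub_le _ _
          have h4 : (0:ℝ) ≤ 4 / (b : ℝ) := by positivity
          have := hDfin (f b)
          nlinarith
    _ = 4 * ((f b : ℝ) / b) + ε / 4 := by ring
  have hfb : 4 * ((f b : ℝ) / b) < ε / 4 := by
    have := hN₂ b hbN₂
    rw [Real.dist_eq, sub_zero] at this
    have h1 : (f b : ℝ) / b ≤ |(f b : ℝ) / b| := le_abs_self _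
    linarith
  have hfindist : |∑ m ∈ Finset.Ioc 0 M, Φ b m / b * L m - ∑ m ∈ Finset.Ioc 0 M, g m| < ε / 4 := by
    have := hN₁ b hbN₁
    rwa [Real.dist_eq] at this
  -- assemble
  have habs : |∑ m ∈ Finset.Ioc 0 M, Φ b m / b * L m
      + ∑ m ∈ Finset.Ioc M (f b), Φ b m / b * L m - T|
      ≤ |∑ m ∈ Finset.Ioc 0 M, Φ b m / b * L m - ∑ m ∈ Finset.Ioc 0 M, g m|
        + |∑ m ∈ Finset.Ioc M (f b), Φ b m / b * L m|
        + |∑ m ∈ Finset.Ioc 0 M, g m - T| := by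
    have := abs_add_le (∑ m ∈ Finset.Ioc 0 M, Φ b m / b * L m - ∑ m ∈ Finset.Ioc 0 M, g m
        + ∑ m ∈ Finset.Ioc M (f b), Φ b m / b * L m) (∑ m ∈ Finset.Ioc 0 M, g m - T)
    have h2 := abs_add_le (∑ m ∈ Finset.Ioc 0 M, Φ b m / b * L m - ∑ m ∈ Finset.Ioc 0 M, g m)
        (∑ m ∈ Finset.Ioc M (f b), Φ b m / b * L m)
    calc |∑ m ∈ Finset.Ioc 0 M, Φ b m / b * L m
        + ∑ m ∈ Finset.Ioc M (f b), Φ b m / b * L m - T|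
        = |(∑ m ∈ Finset.Ioc 0 M, Φ b m / b * L m - ∑ m ∈ Finset.Ioc 0 M, g m
          + ∑ m ∈ Finset.Ioc M (f b), Φ b m / b * L m) + (∑ m ∈ Finset.Ioc 0 M, g m - T)| := by
          congr 1
          ring
    _ ≤ _ := by linarith
  have h5 : |∑ m ∈ Finset.Ioc M (f b), Φ b m / b * L m| < ε / 2 := by
    rw [abs_of_nonneg htail_nonneg]
    exact lt_of_le_of_lt htail_le (by linarith)
  have h6 : |∑ m ∈ Finset.Ioc 0 M, g m - T| ≤ ε / 4 := by
    rw [abs_sub_comm, abs_of_nonneg hgtail.2]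
    exact hgtail.1
  calc |∑ m ∈ Finset.Ioc 0 M, Φ b m / b * L m
      + ∑ m ∈ Finset.Ioc M (f b), Φ b m / b * L m - T| ≤ _ := habs
  _ < ε / 4 + ε / 2 + ε / 4 := by linarith [hfindist, h5, h6]
  _ = ε := by ring
end
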